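/- arXiv:1610.00853 — 9 statements merged into one kernel-verified Lean document; each statement's English description precedes it below -/
import Mathlib

section
/- Let G be a connected (2K_2, C_3, C_4)-free graph (a connected finite simple graph with no induced 2K_2, no induced C_3 and no induced C_4) and let S be a minimal vertex separator of G. Then S is an independent set of G (no two vertices of S are adjacent). -/
variable {V : Type*}

/-- The graph `G − S`: delete the vertices of `S` (they become isolated). -/
def SimpleGraph.removeVerts (G : SimpleGraph V) (S : Set V) : SimpleGraph V where
  Adj u v := G.Adj u v ∧ u ∉ S ∧ v ∉ S
  symm := ⟨fun u v ⟨h, hu, hv⟩ => ⟨h.symm, hv, hu⟩⟩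
  loopless := ⟨fun u ⟨h, _, _⟩ => G.loopless.irrefl u h⟩

/-- `S` is a minimal vertex separator of `G`: some `a, b ∉ S` lie in different
connected components of `G − S`, while for every proper subset `S' ⊊ S` they lie
in the same connected component of `G − S'`. -/
def SimpleGraph.IsMinSep (G : SimpleGraph V) (S : Set V) : Prop :=
  ∃ a b : V, a ∉ S ∧ b ∉ S ∧ ¬ (G.removeVerts S).Reachable a b ∧
    ∀ S' : Set V, S' ⊂ S → (G.removeVerts S').Reachable a b

/-- `C` is (the vertex set of) a connected component of `G − S`. -/
def SimpleGraph.IsCompOf (G : SimpleGraph V) (S : Set V) (C : Set V) : Prop :=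
  ∃ u : V, u ∉ S ∧ C = {v : V | (G.removeVerts S).Reachable u v ∧ v ∉ S}

/-- `G` has no induced `2K₂`. -/
def SimpleGraph.TwoK2Free (G : SimpleGraph V) : Prop :=
  ¬ ∃ a b c d : V, a ≠ b ∧ a ≠ c ∧ a ≠ d ∧ b ≠ c ∧ b ≠ d ∧ c ≠ d ∧
    G.Adj a b ∧ G.Adj c d ∧ ¬ G.Adj a c ∧ ¬ G.Adj a d ∧ ¬ G.Adj b c ∧ ¬ G.Adj b d

/-- `G` has an induced cycle on `k` vertices, all of them lying in `A`. -/
def SimpleGraph.HasInducedCycleOn (G : SimpleGraph V) (A : Set V) (k : ℕ) [NeZero k] : Prop :=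
  ∃ f : Fin k → V, Function.Injective f ∧ (∀ i, f i ∈ A) ∧
    ∀ i j : Fin k, G.Adj (f i) (f j) ↔ (j = i + 1 ∨ i = j + 1)

/-- `G` has no induced cycle on `k` vertices. -/
def SimpleGraph.CkFree (G : SimpleGraph V) (k : ℕ) [NeZero k] : Prop :=
  ¬ G.HasInducedCycleOn Set.univ k

/-- `F` is a feedback vertex set of `G`: `G − F` contains no cycle. -/
def SimpleGraph.IsFVS (G : SimpleGraph V) (F : Set V) : Prop :=
  (G.removeVerts F).IsAcyclic

/-- The minimum cardinality of a feedback vertex set of `G`. -/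
noncomputable def SimpleGraph.minFVS (G : SimpleGraph V) : ℕ :=
  sInf {n : ℕ | ∃ F : Set V, G.IsFVS F ∧ F.ncard = n}

lemma no_triangle {G : SimpleGraph V} (hc3 : G.CkFree 3) {x y z : V}
    (h1 : G.Adj x y) (h2 : G.Adj y z) (h3 : G.Adj x z) : False := by
  apply hc3
  refine ⟨![x, y, z], ?_, fun i => trivial, ?_⟩
  · intro i j hij
    fin_cases i <;> fin_cases j <;> simp_all
  · intro i j
    fin_cases i <;> fin_cases j <;>
      simp [h1, h2, h3, h1.symm, h2.symm, h3.symm, G.irrefl]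

lemma sep_neighbor {G : SimpleGraph V} {S : Set V} {s : V} :
    ∀ {x y : V}, (G.removeVerts (S \ {s})).Walk x y → x ∉ S →
    ¬ (G.removeVerts S).Reachable x y →
    ∃ p, p ∉ S ∧ G.Adj s p ∧ (G.removeVerts S).Reachable x p := by
  intro x y w
  induction w with
  | nil => intro _ hnr; exact absurd (SimpleGraph.Reachable.refl _) hnr
  | @cons x c y h w ih =>
    intro hx hnr
    by_cases hcs : c = s
    · subst hcs
      exact ⟨x, hx, h.1.symm, SimpleGraph.Reachable.refl x⟩
    · have hc : c ∉ S := fun hcS => h.2.2 ⟨hcS, hcs⟩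
      have hadj : (G.removeVerts S).Adj x c := ⟨h.1, hx, hc⟩
      have hnr' : ¬ (G.removeVerts S).Reachable c y := fun hr =>
        hnr (hadj.reachable.trans hr)
      obtain ⟨p, hp, hsp, hr⟩ := ih hc hnr'
      exact ⟨p, hp, hsp, hadj.reachable.trans hr⟩

theorem stmt0 [Fintype V] (G : SimpleGraph V) (S : Set V)
    (hconn : G.Connected) (h2k2 : G.TwoK2Free) (hc3 : G.CkFree 3) (hc4 : G.CkFree 4)
    (hS : G.IsMinSep S) :
    ∀ u ∈ S, ∀ v ∈ S, ¬ G.Adj u v := by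
  obtain ⟨a, b, ha, hb, hnr, hmin⟩ := hS
  intro u hu v hv huv
  -- neighbors of a separator vertex in the components of a and of b
  have key : ∀ s ∈ S, (∃ p, p ∉ S ∧ G.Adj s p ∧ (G.removeVerts S).Reachable a p) ∧
      (∃ q, q ∉ S ∧ G.Adj s q ∧ (G.removeVerts S).Reachable b q) := by
    intro s hs
    have hss : S \ {s} ⊂ S := by
      constructor
      · exact Set.diff_subset
      · intro hsub
        exact (hsub hs).2 rfl
    obtain ⟨w⟩ := hmin _ hss
    refine ⟨sep_neighbor w ha hnr, sep_neighbor w.reverse hb fun hr => hnr hr.symm⟩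
  obtain ⟨⟨p, hpS, hup, hap⟩, ⟨q, hqS, huq, hbq⟩⟩ := key u hu
  obtain ⟨⟨r, hrS, hvr, har⟩, ⟨t, htS, hvt, hbt⟩⟩ := key v hv
  -- cross component facts
  have cross : ∀ {α β : V}, (G.removeVerts S).Reachable a α → α ∉ S →
      (G.removeVerts S).Reachable b β → β ∉ S → α ≠ β ∧ ¬ G.Adj α β := by
    intro α β hα hαS hβ hβS
    constructor
    · rintro rfl; exact hnr (hα.trans hβ.symm)
    · intro hadj
      exact hnr (hα.trans ((SimpleGraph.Adj.reachable (show (G.removeVerts S).Adj α β from ⟨hadj, hαS, hβS⟩)).trans hβ.symm))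
  -- p ≠ r, q ≠ t by triangle-freeness
  have hpr : p ≠ r := by
    rintro rfl; exact no_triangle hc3 huv hvr hup
  have hqt : q ≠ t := by
    rintro rfl; exact no_triangle hc3 huv hvt huq
  -- an edge inside the component of a
  have edgeA : ∃ x y, (G.removeVerts S).Reachable a x ∧ x ∉ S ∧
      (G.removeVerts S).Reachable a y ∧ y ∉ S ∧ G.Adj x y := by
    have : p ≠ a ∨ r ≠ a := by
      rcases eq_or_ne p a with rfl | h
      · exact Or.inr fun h => hpr h.symm
      · exact Or.inl h
    have get : ∀ z : V, (G.removeVerts S).Reachable a z → z ≠ a →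
        ∃ x y, (G.removeVerts S).Reachable a x ∧ x ∉ S ∧
          (G.removeVerts S).Reachable a y ∧ y ∉ S ∧ G.Adj x y := by
      intro z hz hza
      obtain ⟨w⟩ := hz
      cases w with
      | nil => exact absurd rfl hza
      | @cons _ c _ h w' =>
        exact ⟨a, c, SimpleGraph.Reachable.refl a, h.2.1, h.reachable, h.2.2, h.1⟩
    rcases this with h | h
    · exact get p hap h
    · exact get r har h
  -- an edge inside the component of b
  have edgeB : ∃ x y, (G.removeVerts S).Reachable b x ∧ x ∉ S ∧
      (G.removeVerts S).Reachable b y ∧ y ∉ S ∧ G.Adj x y := by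
    have : q ≠ b ∨ t ≠ b := by
      rcases eq_or_ne q b with rfl | h
      · exact Or.inr fun h => hqt h.symm
      · exact Or.inl h
    have get : ∀ z : V, (G.removeVerts S).Reachable b z → z ≠ b →
        ∃ x y, (G.removeVerts S).Reachable b x ∧ x ∉ S ∧
          (G.removeVerts S).Reachable b y ∧ y ∉ S ∧ G.Adj x y := by
      intro z hz hzb
      obtain ⟨w⟩ := hz
      cases w with
      | nil => exact absurd rfl hzb
      | @cons _ c _ h w' =>
        exact ⟨b, c, SimpleGraph.Reachable.refl b, h.2.1, h.reachable, h.2.2, h.1⟩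
    rcases this with h | h
    · exact get q hbq h
    · exact get t hbt h
  obtain ⟨x, y, hax, hxS, hay, hyS, hxy⟩ := edgeA
  obtain ⟨z, w, hbz, hzS, hbw, hwS, hzw⟩ := edgeB
  exact h2k2 ⟨x, y, z, w, hxy.ne,
    (cross hax hxS hbz hzS).1, (cross hax hxS hbw hwS).1,
    (cross hay hyS hbz hzS).1, (cross hay hyS hbw hwS).1, hzw.ne,
    hxy, hzw,
    (cross hax hxS hbz hzS).2, (cross hax hxS hbw hwS).2,
    (cross hay hyS hbz hzS).2, (cross hay hyS hbw hwS).2⟩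
end

section
/- Let G be a connected (2K_2, C_3, C_4)-free graph (a connected finite simple graph with no induced 2K_2, no induced C_3 and no induced C_4), let S be a minimal vertex separator of G, and let G_1 be a non-trivial connected component of G − S. Then for every edge {u, v} of G with u, v ∈ V(G_1), the sets N_G(u) ∩ S and N_G(v) ∩ S are disjoint and their union is S. Consequently, for every vertex x ∈ S, the set N_G(x) ∩ V(G_1) is an independent set of G. -/
variable {V : Type*}

private lemma triangleFree' {V : Type*} (G : SimpleGraph V) (h : G.CkFree 3)
    {a b c : V} (hab : G.Adj a b) (hbc : G.Adj b c) (hac : G.Adj a c) : False := by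
  apply h
  refine ⟨![a, b, c], ?_, fun i => trivial, ?_⟩
  · intro i j hij
    fin_cases i <;> fin_cases j <;>
      simp_all [hab.ne, hbc.ne, hac.ne, hab.ne', hbc.ne', hac.ne']
  · intro i j
    fin_cases i <;> fin_cases j <;>
      simp [hab, hbc, hac, hab.symm, hbc.symm, hac.symm, G.irrefl] <;> decide

private lemma walkAux {V : Type*} (G : SimpleGraph V) (S : Set V) (x : V) :
    ∀ {a b : V}, (G.removeVerts (S \ {x})).Walk a b → a ∉ S →
      (G.removeVerts S).Reachable a b ∨
        ∃ p, p ∉ S ∧ G.Adj p x ∧ (G.removeVerts S).Reachable a p := by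
  intro a b W
  induction W with
  | nil => exact fun _ => Or.inl (SimpleGraph.Reachable.refl _)
  | @cons a c b h W ih =>
    intro ha
    obtain ⟨hadj, ha', hc'⟩ := h
    by_cases hcx : c = x
    · subst hcx
      exact Or.inr ⟨a, ha, hadj, SimpleGraph.Reachable.refl _⟩
    · have hc : c ∉ S := fun hcS => hc' ⟨hcS, hcx⟩
      have hedge : (G.removeVerts S).Adj a c := ⟨hadj, ha, hc⟩
      rcases ih hc with h1 | ⟨p, hp, hpx, hr⟩
      · exact Or.inl (hedge.reachable.trans h1)
      · exact Or.inr ⟨p, hp, hpx, hedge.reachable.trans hr⟩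

theorem stmt2 [Fintype V] (G : SimpleGraph V) (S C : Set V)
    (hconn : G.Connected) (h2k2 : G.TwoK2Free) (hc3 : G.CkFree 3) (hc4 : G.CkFree 4)
    (hS : G.IsMinSep S) (hC : G.IsCompOf S C) (hnt : ¬ ∃ v, C = {v}) :
    (∀ u ∈ C, ∀ v ∈ C, G.Adj u v →
      (G.neighborSet u ∩ S) ∩ (G.neighborSet v ∩ S) = ∅ ∧
      (G.neighborSet u ∩ S) ∪ (G.neighborSet v ∩ S) = S) ∧
    (∀ x ∈ S, ∀ u ∈ G.neighborSet x ∩ C, ∀ v ∈ G.neighborSet x ∩ C, ¬ G.Adj u v) := by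
  obtain ⟨u0, hu0S, hCeq⟩ := hC
  have hmemC : ∀ {w : V}, w ∈ C ↔ (G.removeVerts S).Reachable u0 w ∧ w ∉ S := by
    intro w; rw [hCeq]; rfl
  constructor
  · intro u hu v hv huv
    have hu' := hmemC.mp hu
    have hv' := hmemC.mp hv
    constructor
    · ext x
      simp only [Set.mem_inter_iff, SimpleGraph.mem_neighborSet,
        Set.mem_empty_iff_false, iff_false]
      rintro ⟨⟨hux, _⟩, ⟨hvx, _⟩⟩
      exact triangleFree' G hc3 huv hvx hux
    · apply Set.eq_of_subset_of_subset
      · rintro x (⟨_, hxS⟩ | ⟨_, hxS⟩) <;> exact hxS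
      · intro x hxS
        by_cases hAu : G.Adj u x
        · exact Or.inl ⟨hAu, hxS⟩
        by_cases hAv : G.Adj v x
        · exact Or.inr ⟨hAv, hxS⟩
        exfalso
        obtain ⟨a, b, haS, hbS, hnab, hmin⟩ := hS
        have hsub : S \ {x} ⊂ S := Set.sdiff_singleton_ssubset.mpr hxS
        have hr := hmin (S \ {x}) hsub
        have key : ∀ c d : V, c ∉ S → ¬ (G.removeVerts S).Reachable u0 c →
            (G.removeVerts (S \ {x})).Reachable c d →
            ¬ (G.removeVerts S).Reachable c d → False := by
          intro c d hcS hu0c hcd hncd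
          obtain ⟨p, hpS, hpx, hrp⟩ := (walkAux G S x hcd.some hcS).resolve_left hncd
          have hpu0 : ¬ (G.removeVerts S).Reachable u0 p := fun h => hu0c (h.trans hrp.symm)
          have hup : ¬ G.Adj u p := fun h =>
            hpu0 (hu'.1.trans (SimpleGraph.Adj.reachable ⟨h, hu'.2, hpS⟩))
          have hvp : ¬ G.Adj v p := fun h =>
            hpu0 (hv'.1.trans (SimpleGraph.Adj.reachable ⟨h, hv'.2, hpS⟩))
          exact h2k2 ⟨u, v, x, p, huv.ne,
            (by rintro rfl; exact hu'.2 hxS),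
            (fun h => hpu0 (h ▸ hu'.1)),
            (by rintro rfl; exact hv'.2 hxS),
            (fun h => hpu0 (h ▸ hv'.1)),
            (fun h => hpS (h ▸ hxS)),
            huv, hpx.symm, hAu, hup, hAv, hvp⟩
        by_cases hra : (G.removeVerts S).Reachable u0 a
        · have hrb : ¬ (G.removeVerts S).Reachable u0 b := fun h => hnab (hra.symm.trans h)
          exact key b a hbS hrb hr.symm (fun h => hnab h.symm)
        · exact key a b haS hra hr hnab

  · intro x hxS u hu v hv huv
    exact triangleFree' G hc3 hu.1 huv hv.1
end

section
/- Let G be a connected (2K_2, C_3, C_5)-free graph (a connected finite simple graph with no induced 2K_2, no induced C_3 and no induced C_5), let S be a minimal vertex separator of G, and let G_1 be a non-trivial connected component of G − S. Then for every edge {u, v} of G with u, v ∈ V(G_1), one endpoint is universal to S and the other endpoint has no neighbor in S; that is, after possibly swapping u and v, S ⊆ N_G(u) and N_G(v) ∩ S = ∅. -/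
variable {V : Type*}

lemma removeVerts_adj (G : SimpleGraph V) (S : Set V) {u v : V} :
    (G.removeVerts S).Adj u v ↔ G.Adj u v ∧ u ∉ S ∧ v ∉ S := Iff.rfl

lemma triangle_free (G : SimpleGraph V) (h3 : G.CkFree 3) {x y z : V}
    (hxy : G.Adj x y) (hyz : G.Adj y z) (hxz : G.Adj x z) : False := by
  apply h3
  have h1 := hxy.ne; have h2 := hyz.ne; have h3 := hxz.ne
  have s1 := hxy.symm; have s2 := hyz.symm; have s3 := hxz.symm
  have i1 := G.irrefl (v := x); have i2 := G.irrefl (v := y); have i3 := G.irrefl (v := z)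
  refine ⟨![x, y, z], ?_, fun _ => Set.mem_univ _, ?_⟩
  · intro i j hij
    fin_cases i <;> fin_cases j <;> simp_all
  · intro i j
    fin_cases i <;> fin_cases j <;> simp only [Matrix.cons_val_zero, Matrix.cons_val_one,
      Matrix.head_cons, Matrix.cons_val_two, Matrix.tail_cons] <;>
      first
        | (refine iff_of_true ?_ (by decide); assumption)
        | (refine iff_of_false ?_ (by decide); assumption)

lemma c5_free (G : SimpleGraph V) (h5 : G.CkFree 5) {a b c d e : V}
    (hab : G.Adj a b) (hbc : G.Adj b c) (hcd : G.Adj c d) (hde : G.Adj d e) (hea : G.Adj e a)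
    (hac : ¬G.Adj a c) (had : ¬G.Adj a d) (hbd : ¬G.Adj b d) (hbe : ¬G.Adj b e)
    (hce : ¬G.Adj c e) : False := by
  apply h5
  have n1 := hab.ne; have n2 := hbc.ne; have n3 := hcd.ne; have n4 := hde.ne
  have n5 := hea.ne; have n5' := hea.ne.symm
  have nac : a ≠ c := fun h => hce (h ▸ hea.symm)
  have nad : a ≠ d := fun h => hbd (h ▸ hab.symm)
  have nbd : b ≠ d := fun h => hbe (h ▸ hde)
  have nbe : b ≠ e := fun h => hce (h ▸ hbc.symm)
  have nce : c ≠ e := fun h => hac (h ▸ hea.symm)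
  have s1 := hab.symm; have s2 := hbc.symm; have s3 := hcd.symm; have s4 := hde.symm
  have s5 := hea.symm
  have m1 : ¬G.Adj c a := fun h => hac h.symm
  have m2 : ¬G.Adj d a := fun h => had h.symm
  have m3 : ¬G.Adj d b := fun h => hbd h.symm
  have m4 : ¬G.Adj e b := fun h => hbe h.symm
  have m5 : ¬G.Adj e c := fun h => hce h.symm
  have i1 := G.irrefl (v := a); have i2 := G.irrefl (v := b); have i3 := G.irrefl (v := c)
  have i4 := G.irrefl (v := d); have i5 := G.irrefl (v := e)
  refine ⟨![a, b, c, d, e], ?_, fun _ => Set.mem_univ _, ?_⟩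
  · intro i j hij
    fin_cases i <;> fin_cases j <;> simp_all
  · intro i j
    fin_cases i <;> fin_cases j <;> simp only [Matrix.cons_val_zero, Matrix.cons_val_one,
      Matrix.head_cons, Matrix.cons_val_two, Matrix.tail_cons, Matrix.cons_val_three,
      Matrix.cons_val_four] <;>
      first
        | (refine iff_of_true ?_ (by decide); assumption)
        | (refine iff_of_false ?_ (by decide); assumption)

lemma sep_nbr (G : SimpleGraph V) (S : Set V) (s : V) :
    ∀ {a b : V}, (G.removeVerts (S \ {s})).Walk a b → a ∉ S →
      ¬(G.removeVerts S).Reachable a b →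
      ∃ p, p ∉ S ∧ G.Adj s p ∧ (G.removeVerts S).Reachable a p := by
  intro a b W
  induction W with
  | nil => exact fun ha hnr => absurd (SimpleGraph.Reachable.refl _) hnr
  | @cons a c b h W ih =>
    intro ha hnr
    obtain ⟨hac, haS', hcS'⟩ := (removeVerts_adj G _).mp h
    by_cases hcs : c = s
    · subst hcs; exact ⟨a, ha, hac.symm, SimpleGraph.Reachable.refl a⟩
    · have hcS : c ∉ S := fun hmem => hcS' ⟨hmem, hcs⟩
      have hstep : (G.removeVerts S).Adj a c := (removeVerts_adj G S).mpr ⟨hac, ha, hcS⟩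
      by_cases hr : (G.removeVerts S).Reachable c b
      · exact absurd (hstep.reachable.trans hr) hnr
      · obtain ⟨p, h1, h2, h3⟩ := ih hcS hr
        exact ⟨p, h1, h2, hstep.reachable.trans h3⟩

theorem stmt6 [Fintype V] (G : SimpleGraph V) (S C : Set V)
    (hconn : G.Connected) (h2k2 : G.TwoK2Free) (hc3 : G.CkFree 3) (hc5 : G.CkFree 5)
    (hS : G.IsMinSep S) (hC : G.IsCompOf S C) (hnt : ¬ ∃ v, C = {v}) :
    ∀ u ∈ C, ∀ v ∈ C, G.Adj u v →
      (S ⊆ G.neighborSet u ∧ G.neighborSet v ∩ S = ∅) ∨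
      (S ⊆ G.neighborSet v ∧ G.neighborSet u ∩ S = ∅) := by
  obtain ⟨a, b, haS, hbS, hnab, hmin⟩ := hS
  obtain ⟨u0, hu0, hCeq⟩ := hC
  intro u hu v hv huv
  rw [hCeq] at hu hv
  obtain ⟨huR, huS⟩ := hu
  obtain ⟨hvR, hvS⟩ := hv
  -- there are no edges with an endpoint outside S ∪ C (both endpoints outside S)
  have hnoout : ∀ x y : V, G.Adj x y → x ∉ S → y ∉ S →
      ¬(G.removeVerts S).Reachable u0 x → False := by
    intro x y hxy hxS hyS hxC
    have hyC : ¬(G.removeVerts S).Reachable u0 y := fun h =>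
      hxC (h.trans (SimpleGraph.Adj.reachable ((removeVerts_adj G S).mpr ⟨hxy.symm, hyS, hxS⟩)))
    apply h2k2
    refine ⟨u, v, x, y, huv.ne, ?_, ?_, ?_, ?_, hxy.ne, huv, hxy, ?_, ?_, ?_, ?_⟩
    · rintro rfl; exact hxC huR
    · rintro rfl; exact hyC huR
    · rintro rfl; exact hxC hvR
    · rintro rfl; exact hyC hvR
    · exact fun h => hxC (huR.trans (SimpleGraph.Adj.reachable
        ((removeVerts_adj G S).mpr ⟨h, huS, hxS⟩)))
    · exact fun h => hyC (huR.trans (SimpleGraph.Adj.reachable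
        ((removeVerts_adj G S).mpr ⟨h, huS, hyS⟩)))
    · exact fun h => hxC (hvR.trans (SimpleGraph.Adj.reachable
        ((removeVerts_adj G S).mpr ⟨h, hvS, hxS⟩)))
    · exact fun h => hyC (hvR.trans (SimpleGraph.Adj.reachable
        ((removeVerts_adj G S).mpr ⟨h, hvS, hyS⟩)))
  -- a vertex w outside S, not in C, such that every s ∈ S has a neighbor reachable from w
  have hw : ∃ w, w ∉ S ∧ ¬(G.removeVerts S).Reachable u0 w ∧
      ∀ s ∈ S, ∃ p, p ∉ S ∧ G.Adj s p ∧ (G.removeVerts S).Reachable w p := by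
    by_cases hra : (G.removeVerts S).Reachable u0 a
    · refine ⟨b, hbS, fun h => hnab (hra.symm.trans h), fun s hs => ?_⟩
      have hss : S \ {s} ⊂ S := ⟨Set.diff_subset, fun h => (h hs).2 rfl⟩
      obtain ⟨W⟩ := hmin (S \ {s}) hss
      exact sep_nbr G S s W.reverse hbS (fun h => hnab h.symm)
    · refine ⟨a, haS, hra, fun s hs => ?_⟩
      have hss : S \ {s} ⊂ S := ⟨Set.diff_subset, fun h => (h hs).2 rfl⟩
      obtain ⟨W⟩ := hmin (S \ {s}) hss
      exact sep_nbr G S s W haS hnab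
  obtain ⟨w, hwS, hwR, hwnbr⟩ := hw
  -- every s ∈ S is adjacent to w
  have hadjw : ∀ s ∈ S, G.Adj s w := by
    intro s hs
    obtain ⟨p, hpS, hsp, hr⟩ := hwnbr s hs
    obtain ⟨W⟩ := hr
    cases W with
    | nil => exact hsp
    | cons h W' =>
      obtain ⟨h1, h2, h3⟩ := (removeVerts_adj G S).mp h
      exact (hnoout w _ h1 h2 h3 hwR).elim
  have hnuw : ¬ G.Adj u w := fun h => hwR (huR.trans (SimpleGraph.Adj.reachable
      ((removeVerts_adj G S).mpr ⟨h, huS, hwS⟩)))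
  have hnvw : ¬ G.Adj v w := fun h => hwR (hvR.trans (SimpleGraph.Adj.reachable
      ((removeVerts_adj G S).mpr ⟨h, hvS, hwS⟩)))
  -- every s ∈ S is adjacent to exactly one of u, v
  have h45 : ∀ s ∈ S, (G.Adj u s ∧ ¬ G.Adj v s) ∨ (G.Adj v s ∧ ¬ G.Adj u s) := by
    intro s hs
    have hnb : ¬(G.Adj u s ∧ G.Adj v s) := fun h => triangle_free G hc3 huv h.2 h.1
    by_cases h1 : G.Adj u s
    · exact Or.inl ⟨h1, fun h2 => hnb ⟨h1, h2⟩⟩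
    by_cases h2 : G.Adj v s
    · exact Or.inr ⟨h2, h1⟩
    exfalso
    apply h2k2
    refine ⟨u, v, s, w, huv.ne, ?_, ?_, ?_, ?_, ?_, huv, hadjw s hs, h1, hnuw, h2, hnvw⟩
    · rintro rfl; exact huS hs
    · rintro rfl; exact hwR huR
    · rintro rfl; exact hvS hs
    · rintro rfl; exact hwR hvR
    · rintro rfl; exact hwS hs
  -- not both: some s adjacent to u and some t adjacent to v
  have h6 : ∀ s ∈ S, G.Adj u s → ∀ t ∈ S, G.Adj v t → False := by
    intro s hs hus t ht hvt
    have hnvs : ¬ G.Adj v s := ((h45 s hs).resolve_right (fun h => h.2 hus)).2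
    have hnut : ¬ G.Adj u t := ((h45 t ht).resolve_left (fun h => h.2 hvt)).2
    by_cases hadj : G.Adj s t
    · exact triangle_free G hc3 hadj (hadjw t ht) (hadjw s hs)
    · exact c5_free G hc5 hus (hadjw s hs) (hadjw t ht).symm hvt.symm huv.symm
        hnuw hnut hadj (fun h => hnvs h.symm) (fun h => hnvw h.symm)
  by_cases hex : ∃ t ∈ S, G.Adj v t
  · obtain ⟨t, ht, hvt⟩ := hex
    refine Or.inr ⟨?_, ?_⟩
    · intro s hs
      rcases h45 s hs with ⟨h1, _⟩ | ⟨h1, _⟩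
      · exact (h6 s hs h1 t ht hvt).elim
      · exact h1
    · rw [Set.eq_empty_iff_forall_notMem]
      rintro x ⟨hx1, hx2⟩
      exact h6 x hx2 hx1 t ht hvt
  · refine Or.inl ⟨?_, ?_⟩
    · intro s hs
      rcases h45 s hs with ⟨h1, _⟩ | ⟨h1, _⟩
      · exact h1
      · exact absurd ⟨s, hs, h1⟩ hex
    · rw [Set.eq_empty_iff_forall_notMem]
      rintro x ⟨hx1, hx2⟩
      exact hex ⟨x, hx2, hx1⟩
end

section
/- Let G be a connected (2K_2, C_3, C_5)-free graph (a connected finite simple graph with no induced 2K_2, no induced C_3 and no induced C_5), let S be a minimal vertex separator of G, and let G_1 be a non-trivial connected component of G − S. Let U be the set of vertices of G_1 that are universal to S and U' = V(G_1) \ U. Then there exists a vertex u ∈ U that is adjacent in G to every vertex of U'. -/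
variable {V : Type*}

lemma noTri {G : SimpleGraph V} (hc3 : G.CkFree 3) {a b c : V}
    (hab : G.Adj a b) (hbc : G.Adj b c) (hac : G.Adj a c) : False := by
  apply hc3
  refine ⟨![a,b,c], ?_, fun i => Set.mem_univ _, ?_⟩
  · intro i j
    fin_cases i <;> fin_cases j <;>
      simp_all [hab.ne, hbc.ne, hac.ne, hab.ne', hbc.ne', hac.ne']
  · intro i j
    fin_cases i <;> fin_cases j <;>
      simp [hab, hbc, hac, hab.symm, hbc.symm, hac.symm, G.irrefl]

lemma noC5' {G : SimpleGraph V} (hc5 : G.CkFree 5) {a b c d e : V}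
    (hab : G.Adj a b) (hbc : G.Adj b c) (hcd : G.Adj c d) (hde : G.Adj d e) (hea : G.Adj e a)
    (hac : ¬G.Adj a c) (had : ¬G.Adj a d) (hbd : ¬G.Adj b d) (hbe : ¬G.Adj b e) (hce : ¬G.Adj c e)
    (nac : a ≠ c) (nad : a ≠ d) (nbd : b ≠ d) (nbe : b ≠ e) (nce : c ≠ e) : False := by
  have hca : ¬G.Adj c a := fun h => hac h.symm
  have hda : ¬G.Adj d a := fun h => had h.symm
  have hdb : ¬G.Adj d b := fun h => hbd h.symm
  have heb : ¬G.Adj e b := fun h => hbe h.symm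
  have hec : ¬G.Adj e c := fun h => hce h.symm
  apply hc5
  refine ⟨![a,b,c,d,e], ?_, fun i => Set.mem_univ _, ?_⟩
  · intro i j
    fin_cases i <;> fin_cases j <;>
      simp_all [hab.ne, hbc.ne, hcd.ne, hde.ne, hea.ne,
        hab.ne', hbc.ne', hcd.ne', hde.ne', hea.ne', nac.symm, nad.symm, nbd.symm, nbe.symm, nce.symm]
  · intro i j
    fin_cases i <;> fin_cases j <;>
      simp [hab, hbc, hcd, hde, hea, hab.symm, hbc.symm, hcd.symm, hde.symm, hea.symm,
        hac, had, hbd, hbe, hce, G.irrefl, hca, hda, hdb, heb, hec]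

lemma walk_sep {G : SimpleGraph V} {S : Set V} {s : V} (hs : s ∈ S) {b : V} :
    ∀ {x : V} (_ : (G.removeVerts (S \ {s})).Walk x b), x ∉ S →
      (G.removeVerts S).Reachable x b ∨
        ∃ p, G.Adj s p ∧ p ∉ S ∧ (G.removeVerts S).Reachable x p := by
  intro x w
  induction w with
  | nil => exact fun _ => Or.inl (SimpleGraph.Reachable.refl _)
  | @cons u v _ h p ih =>
    intro hu
    by_cases hv : v = s
    · exact Or.inr ⟨u, by rw [hv] at h; exact h.1.symm, hu, SimpleGraph.Reachable.refl _⟩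
    · have hvS : v ∉ S := fun hvS => h.2.2 (Set.mem_diff_singleton.mpr ⟨hvS, hv⟩)
      have hadj : (G.removeVerts S).Adj u v := ⟨h.1, hu, hvS⟩
      rcases ih hvS with h1 | ⟨p, hp1, hp2, hp3⟩
      · exact Or.inl (hadj.reachable.trans h1)
      · exact Or.inr ⟨p, hp1, hp2, hadj.reachable.trans hp3⟩

lemma reach_nbr {G : SimpleGraph V} {v w : V} (h : G.Reachable v w) (hne : v ≠ w) :
    ∃ x, G.Adj v x := by
  obtain ⟨p⟩ := h
  cases p with
  | nil => exact absurd rfl hne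
  | cons h _ => exact ⟨_, h⟩

lemma iff_flip {P1 P2 Q1 Q2 : Prop} (h0 : P1 ↔ ¬P2) (h1 : Q1 ↔ ¬Q2) :
    (P1 ↔ Q1) ↔ (P2 ↔ Q2) := by tauto

lemma walk_iff {H : SimpleGraph V} {Q : V → Prop} {C : Set V}
    (hC : ∀ v ∈ C, ∀ w, H.Adj v w → w ∈ C)
    (hstep : ∀ v ∈ C, ∀ w ∈ C, H.Adj v w → (Q v ↔ Q w)) :
    ∀ {v w : V}, H.Walk v w → v ∈ C → Q v → Q w := by
  intro v w p
  induction p with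
  | nil => exact fun _ h => h
  | cons h p ih =>
    intro hv hQ
    have hw := hC _ hv _ h
    exact ih hw ((hstep _ hv _ hw h).mp hQ)

theorem stmt8 [Fintype V] (G : SimpleGraph V) (S C U : Set V)
    (hconn : G.Connected) (h2k2 : G.TwoK2Free) (hc3 : G.CkFree 3) (hc5 : G.CkFree 5)
    (hS : G.IsMinSep S) (hC : G.IsCompOf S C) (hnt : ¬ ∃ v, C = {v})
    (hU : U = {v ∈ C | ∀ s ∈ S, G.Adj v s}) :
    ∃ u ∈ U, ∀ w ∈ C \ U, G.Adj u w := by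
  classical
  obtain ⟨u0, hu0S, hCdef⟩ := hC
  have memC : ∀ v : V, v ∈ C ↔ ((G.removeVerts S).Reachable u0 v ∧ v ∉ S) := by
    intro v; rw [hCdef]; exact Iff.rfl
  have hu0C : u0 ∈ C := (memC u0).mpr ⟨SimpleGraph.Reachable.refl _, hu0S⟩
  have hCS : ∀ v ∈ C, v ∉ S := fun v hv => ((memC v).mp hv).2
  have hCreach : ∀ v ∈ C, ∀ w ∈ C, (G.removeVerts S).Reachable v w :=
    fun v hv w hw => (((memC v).mp hv).1.symm.trans ((memC w).mp hw).1)
  have hstepC : ∀ v ∈ C, ∀ w, (G.removeVerts S).Adj v w → w ∈ C :=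
    fun v hv w h => (memC w).mpr ⟨((memC v).mp hv).1.trans h.reachable, h.2.2⟩
  have cross : ∀ v ∈ C, ∀ w, w ∉ S → w ∉ C → ¬ G.Adj v w :=
    fun v hv w hwS hwC hadj => hwC (hstepC v hv w ⟨hadj, hCS v hv, hwS⟩)
  have nbrC : ∀ v ∈ C, ∃ w ∈ C, G.Adj v w := by
    intro v hv
    have hex : ∃ w ∈ C, w ≠ v := by
      by_contra h
      push_neg at h
      exact hnt ⟨v, Set.eq_singleton_iff_unique_mem.mpr ⟨hv, h⟩⟩
    obtain ⟨w, hw, hwv⟩ := hex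
    obtain ⟨x, hx⟩ := reach_nbr (hCreach v hv w hw) (Ne.symm hwv)
    exact ⟨x, hstepC v hv x hx, hx.1⟩
  obtain ⟨a, b, haS, hbS, hnab, hmin⟩ := hS
  have hSne : S.Nonempty := by
    by_contra h
    rw [Set.not_nonempty_iff_eq_empty] at h
    subst h
    exact hnab ((hconn.preconnected a b).mono
      (fun u v h' => ⟨h', Set.notMem_empty _, Set.notMem_empty _⟩))
  have habC : ¬(a ∈ C ∧ b ∈ C) := fun ⟨ha, hb⟩ => hnab (hCreach a ha b hb)
  obtain ⟨t, t', htS, ht'S, hrt, hntt, htC⟩ :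
      ∃ t t', t ∉ S ∧ t' ∉ S ∧ (∀ s ∈ S, (G.removeVerts (S \ {s})).Reachable t t') ∧
        ¬(G.removeVerts S).Reachable t t' ∧ t ∉ C := by
    by_cases haC : a ∈ C
    · exact ⟨b, a, hbS, haS, fun s hs => (hmin _ (Set.sdiff_singleton_ssubset.mpr hs)).symm,
        fun h => hnab h.symm, fun hb => habC ⟨haC, hb⟩⟩
    · exact ⟨a, b, haS, hbS, fun s hs => hmin _ (Set.sdiff_singleton_ssubset.mpr hs), hnab, haC⟩
  have zOf : ∀ s ∈ S, ∃ p, G.Adj s p ∧ p ∉ S ∧ p ∉ C ∧ (G.removeVerts S).Reachable t p := by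
    intro s hs
    obtain ⟨w⟩ := hrt s hs
    rcases walk_sep hs w htS with h | ⟨p, hp1, hp2, hp3⟩
    · exact absurd h hntt
    · refine ⟨p, hp1, hp2, fun hpC => htC ((memC t).mpr
        ⟨((memC p).mp hpC).1.trans hp3.symm, htS⟩), hp3⟩
  have no2k2 : ∀ {x y z w : V}, x ≠ z → x ≠ w → y ≠ z → y ≠ w → G.Adj x y → G.Adj z w →
      ¬G.Adj x z → ¬G.Adj x w → ¬G.Adj y z → ¬G.Adj y w → False :=
    fun hxz hxw hyz hyw hxy hzw h1 h2 h3 h4 =>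
      h2k2 ⟨_, _, _, _, hxy.ne, hxz, hxw, hyz, hyw, hzw.ne, hxy, hzw, h1, h2, h3, h4⟩
  have Esplit : ∀ s ∈ S, ∀ x ∈ C, ∀ y ∈ C, G.Adj x y → (G.Adj s x ↔ ¬ G.Adj s y) := by
    intro s hs x hx y hy hxy
    obtain ⟨z, hsz, hzS, hzC, _⟩ := zOf s hs
    constructor
    · exact fun hsx hsy => noTri hc3 hsx hxy hsy
    · intro hnsy
      by_contra hnsx
      have n1 : x ≠ s := fun h => hCS s (h ▸ hx) hs
      have n2 : x ≠ z := fun h => hzC (h ▸ hx)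
      have n3 : y ≠ s := fun h => hCS s (h ▸ hy) hs
      have n4 : y ≠ z := fun h => hzC (h ▸ hy)
      exact no2k2 n1 n2 n3 n4 hxy hsz
        (fun h => hnsx h.symm) (cross x hx z hzS hzC)
        (fun h => hnsy h.symm) (cross y hy z hzS hzC)
  obtain ⟨s0, hs0⟩ := hSne
  have Qinv : ∀ s ∈ S, ∀ v ∈ C, ∀ w ∈ C,
      (G.Adj s0 v ↔ G.Adj s v) → (G.Adj s0 w ↔ G.Adj s w) := by
    intro s hs v hv w hw hQ
    obtain ⟨p⟩ := hCreach v hv w hw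
    refine walk_iff (Q := fun v => (G.Adj s0 v ↔ G.Adj s v)) hstepC ?_ p hv hQ
    intro v' hv' w' hw' hadj
    have h0 := Esplit s0 hs0 v' hv' w' hw' hadj.1
    have h1 := Esplit s hs v' hv' w' hw' hadj.1
    exact iff_flip h0 h1
  -- a base edge of C with s0 adjacent to exactly one endpoint
  obtain ⟨w1, hw1C, hadj01⟩ := nbrC u0 hu0C
  obtain ⟨x, y, hxC, hyC, hxy, hs0x, hns0y⟩ :
      ∃ x y, x ∈ C ∧ y ∈ C ∧ G.Adj x y ∧ G.Adj s0 x ∧ ¬G.Adj s0 y := by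
    have hiff := Esplit s0 hs0 u0 hu0C w1 hw1C hadj01
    by_cases h : G.Adj s0 u0
    · exact ⟨u0, w1, hu0C, hw1C, hadj01, h, hiff.mp h⟩
    · exact ⟨w1, u0, hw1C, hu0C, hadj01.symm, by tauto, h⟩
  by_cases hcase : ∀ s ∈ S, ∀ v ∈ C, (G.Adj s v ↔ G.Adj s0 v)
  · -- all of S behaves like s0; U is the s0-side of the bipartition
    have hUA : U = {v ∈ C | G.Adj s0 v} := by
      rw [hU]
      ext v
      simp only [Set.mem_setOf_eq, Set.mem_sep_iff]
      constructor
      · rintro ⟨hv, h⟩; exact ⟨hv, (h s0 hs0).symm⟩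
      · rintro ⟨hv, h⟩; exact ⟨hv, fun s hs => ((hcase s hs v hv).mpr h).symm⟩
    set f : V → ℕ := fun v => {y ∈ C | ¬G.Adj s0 y ∧ G.Adj v y}.ncard with hf
    obtain ⟨u, hu, hmax⟩ := Set.exists_max_image {v ∈ C | G.Adj s0 v} f
      (Set.toFinite _) ⟨x, hxC, hs0x⟩
    obtain ⟨huC, hs0u⟩ := hu
    refine ⟨u, by rw [hUA]; exact ⟨huC, hs0u⟩, ?_⟩
    rintro w ⟨hwC, hwU⟩
    have hns0w : ¬G.Adj s0 w := by
      rw [hUA] at hwU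
      exact fun h => hwU ⟨hwC, h⟩
    by_contra huw
    obtain ⟨x', hx'C, hwx'⟩ := nbrC w hwC
    have hs0x' : G.Adj s0 x' := by
      have := Esplit s0 hs0 w hwC x' hx'C hwx'
      tauto
    have hnsub : ¬({y ∈ C | ¬G.Adj s0 y ∧ G.Adj u y} ⊆ {y ∈ C | ¬G.Adj s0 y ∧ G.Adj x' y}) := by
      intro hsub
      have hwmem : w ∈ {y ∈ C | ¬G.Adj s0 y ∧ G.Adj x' y} := ⟨hwC, hns0w, hwx'.symm⟩
      have hwnot : w ∉ {y ∈ C | ¬G.Adj s0 y ∧ G.Adj u y} := fun h => huw h.2.2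
      have hss : {y ∈ C | ¬G.Adj s0 y ∧ G.Adj u y} ⊂ {y ∈ C | ¬G.Adj s0 y ∧ G.Adj x' y} :=
        Set.ssubset_iff_subset_ne.mpr ⟨hsub, fun hEq => hwnot (hEq ▸ hwmem)⟩
      have hlt : f u < f x' := Set.ncard_lt_ncard hss (Set.toFinite _)
      exact absurd (hmax x' ⟨hx'C, hs0x'⟩) (not_le.mpr hlt)
    obtain ⟨y', hy'mem, hy'not⟩ := Set.not_subset.mp hnsub
    obtain ⟨hy'C, hns0y', huy'⟩ := hy'mem
    have hnx'y' : ¬G.Adj x' y' := fun h => hy'not ⟨hy'C, hns0y', h⟩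
    -- 2K2 on edges (x', w) and (u, y')
    have hnx'u : ¬G.Adj x' u := fun h => noTri hc3 hs0x' h hs0u
    have hnwy' : ¬G.Adj w y' := fun h =>
      hns0w ((Esplit s0 hs0 w hwC y' hy'C h).mpr hns0y')
    have n1 : x' ≠ u := fun h => huw (by rw [← h]; exact hwx'.symm)
    have n2 : x' ≠ y' := fun h => hns0y' (h ▸ hs0x')
    have n3 : w ≠ u := fun h => hns0w (by rw [h]; exact hs0u)
    have n4 : w ≠ y' := fun h => huw (by rw [h]; exact huy')
    exact no2k2 n1 n2 n3 n4 hwx'.symm huy' hnx'u hnx'y' (fun h => huw h.symm) hnwy'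
  · -- impossible case: some s1 behaves oppositely to s0 on C
    exfalso
    push_neg at hcase
    obtain ⟨s1, hs1, v, hvC, hne⟩ := hcase
    have hall : ∀ w ∈ C, (G.Adj s1 w ↔ ¬ G.Adj s0 w) := by
      intro w hw
      have hnQ : ¬(G.Adj s0 w ↔ G.Adj s1 w) := by
        intro hQ
        have := Qinv s1 hs1 w hw v hvC hQ
        tauto
      tauto
    have hs1y : G.Adj s1 y := (hall y hyC).mpr hns0y
    have hns1x : ¬G.Adj s1 x := fun h => ((hall x hxC).mp h) hs0x
    have hs0s1 : s0 ≠ s1 := fun h => hns1x (h ▸ hs0x)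
    by_cases h01 : G.Adj s0 s1
    · obtain ⟨p, hs0p, hpS, hpC, hpr⟩ := zOf s0 hs0
      obtain ⟨q, hs1q, hqS, hqC, hqr⟩ := zOf s1 hs1
      by_cases hpq : p = q
      · exact noTri hc3 h01 hs1q (hpq ▸ hs0p)
      · obtain ⟨r, hr⟩ := reach_nbr (hpr.symm.trans hqr) hpq
        have hrS : r ∉ S := hr.2.2
        have hrC : r ∉ C := fun hrC' => htC ((memC t).mpr
          ⟨((memC r).mp hrC').1.trans (hpr.trans hr.reachable).symm, htS⟩)
        have n1 : x ≠ p := fun h => hpC (h ▸ hxC)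
        have n2 : x ≠ r := fun h => hrC (h ▸ hxC)
        have n3 : y ≠ p := fun h => hpC (h ▸ hyC)
        have n4 : y ≠ r := fun h => hrC (h ▸ hyC)
        exact no2k2 n1 n2 n3 n4 hxy hr.1
          (cross x hxC p hpS hpC) (cross x hxC r hrS hrC)
          (cross y hyC p hpS hpC) (cross y hyC r hrS hrC)
    · obtain ⟨z, hs1z, hzS, hzC, _⟩ := zOf s1 hs1
      have hs0z : G.Adj s0 z := by
        by_contra hns0z
        have n2 : s0 ≠ z := fun h => hzS (h ▸ hs0)
        have n3 : x ≠ s1 := fun h => hCS s1 (h ▸ hxC) hs1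
        have n4 : x ≠ z := fun h => hzC (h ▸ hxC)
        exact no2k2 hs0s1 n2 n3 n4 hs0x hs1z h01 hns0z
          (fun h => hns1x h.symm) (cross x hxC z hzS hzC)
      have n1 : x ≠ s1 := fun h => hCS s1 (h ▸ hxC) hs1
      have n2 : x ≠ z := fun h => hzC (h ▸ hxC)
      have n3 : y ≠ z := fun h => hzC (h ▸ hyC)
      have n4 : y ≠ s0 := fun h => hCS s0 (h ▸ hyC) hs0
      exact noC5' hc5 hxy hs1y.symm hs1z hs0z.symm hs0x
        (fun h => hns1x h.symm) (cross x hxC z hzS hzC) (cross y hyC z hzS hzC)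
        (fun h => hns0y h.symm) (fun h => h01 h.symm)
        n1 n2 n3 n4 hs0s1.symm
end

section
/- Let G be a connected (2K_2, C_4, C_5)-free graph (a connected finite simple graph with no induced 2K_2, no induced C_4 and no induced C_5) and let S be a minimal vertex separator of G such that every connected component of G − S is trivial. Then the minimum cardinality of a feedback vertex set of G equals |S| − 1; indeed S \ {v} is a minimum feedback vertex set for some v ∈ S. -/
variable {V : Type*}

open SimpleGraph in
lemma star_acyclic' (H : SimpleGraph V) (v : V)
    (h : ∀ x y, H.Adj x y → x = v ∨ y = v) : H.IsAcyclic := by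
  intro u c hc
  match c with
  | .nil => exact hc.ne_nil rfl
  | .cons h₁ .nil => exact H.loopless.irrefl u h₁
  | .cons h₁ (.cons h₂ .nil) => simpa using hc.three_le_length
  | .cons (v := x₁) h₁ (.cons (v := x₂) h₂ (.cons (v := x₃) h₃ r)) =>
    have hnd := hc.support_nodup
    simp [SimpleGraph.Walk.support_cons] at hnd
    have h12 : x₁ ≠ x₂ := hnd.1.1
    have h13 : x₁ ≠ x₃ := fun e => (hnd.1.2) (e ▸ r.start_mem_support)
    have h2u : x₂ ≠ u := fun e => (hnd.2.1) (e ▸ r.end_mem_support)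
    rcases h _ _ h₂ with h1v | h2v
    · rcases h _ _ h₃ with h2v | h3v
      · exact h12 (h1v.trans h2v.symm)
      · exact h13 (h1v.trans h3v.symm)
    · rcases h _ _ h₁ with huv | h1v
      · exact h2u (h2v.trans huv.symm)
      · exact h12 (h1v.trans h2v.symm)

lemma first_step' {H : SimpleGraph V} {a b : V} (h : H.Reachable a b) (hne : a ≠ b) :
    ∃ x, H.Adj a x := by
  obtain ⟨w⟩ := h
  cases w with
  | nil => exact absurd rfl hne
  | cons h p => exact ⟨_, h⟩

open SimpleGraph in
lemma triangle_not_acyclic' (H : SimpleGraph V) {x y z : V} (hxy : H.Adj x y)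
    (hyz : H.Adj y z) (hzx : H.Adj z x) : ¬ H.IsAcyclic := by
  intro hac
  exact hac (Walk.cons hxy (Walk.cons hyz (Walk.cons hzx Walk.nil)))
    (by simp [Walk.isCycle_def, Walk.isTrail_def, hxy.ne, hyz.ne, hzx.ne, hzx.ne.symm,
          hxy.ne.symm, hyz.ne.symm, Sym2.eq_iff])

lemma removeVerts_empty' (G : SimpleGraph V) : G.removeVerts ∅ = G := by
  ext u v; simp [SimpleGraph.removeVerts]

theorem stmt12 [Fintype V] (G : SimpleGraph V) (S : Set V)
    (hconn : G.Connected) (h2k2 : G.TwoK2Free) (hc4 : G.CkFree 4) (hc5 : G.CkFree 5)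
    (hS : G.IsMinSep S)
    (htriv : ∀ C : Set V, G.IsCompOf S C → ∃ v, C = {v}) :
    G.minFVS = S.ncard - 1 ∧
    ∃ v ∈ S, G.IsFVS (S \ {v}) ∧ ∀ F : Set V, G.IsFVS F → (S \ {v}).ncard ≤ F.ncard := by
  classical
  obtain ⟨a, b, haS, hbS, hnr, hmin⟩ := hS
  -- S is nonempty
  have hSne : S.Nonempty := by
    rcases Set.eq_empty_or_nonempty S with h | h
    · subst h
      rw [removeVerts_empty'] at hnr
      exact absurd (hconn.preconnected a b) hnr
    · exact h
  -- every vertex outside S has all neighbors in S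
  have hout : ∀ u ∉ S, ∀ w, G.Adj u w → w ∈ S := by
    intro u hu w hadj
    by_contra hw
    obtain ⟨x, hx⟩ := htriv _ ⟨u, hu, rfl⟩
    have hu' : u ∈ {v : V | (G.removeVerts S).Reachable u v ∧ v ∉ S} :=
      ⟨SimpleGraph.Reachable.refl u, hu⟩
    have hw' : w ∈ {v : V | (G.removeVerts S).Reachable u v ∧ v ∉ S} :=
      ⟨SimpleGraph.Adj.reachable ⟨hadj, hu, hw⟩, hw⟩
    rw [hx] at hu' hw'
    exact G.loopless.irrefl u (by rwa [show w = u from hw'.trans hu'.symm] at hadj)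
  have hne : a ≠ b := fun h => hnr (h ▸ SimpleGraph.Reachable.refl a)
  have hnadj : ¬ G.Adj a b := fun h => hnr (SimpleGraph.Adj.reachable ⟨h, haS, hbS⟩)
  -- every s ∈ S is adjacent to a and b
  have hadjS : ∀ s ∈ S, G.Adj a s ∧ G.Adj b s := by
    intro s hs
    have hsub : S \ {s} ⊂ S := Set.sdiff_singleton_ssubset.mpr hs
    have hr := hmin _ hsub
    have key : ∀ c : V, c ∉ S → (G.removeVerts (S \ {s})).Reachable c b → c ≠ b → G.Adj c s := by
      intro c hc hrc hcb
      obtain ⟨x, hadj, -, hxs⟩ := first_step' hrc hcb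
      have hxS := hout c hc x hadj
      have hx : x = s := by
        by_contra hxne
        exact hxs ⟨hxS, hxne⟩
      exact hx ▸ hadj
    refine ⟨key a haS hr hne, ?_⟩
    obtain ⟨x, hadj, -, hxs⟩ := first_step' hr.symm hne.symm
    have hxS := hout b hbS x hadj
    have hx : x = s := by
      by_contra hxne
      exact hxs ⟨hxS, hxne⟩
    exact hx ▸ hadj
  -- S is a clique
  have hclique : ∀ s ∈ S, ∀ t ∈ S, s ≠ t → G.Adj s t := by
    intro s hs t ht hst
    by_contra hadjst
    apply hc4
    have has : a ≠ s := fun h => haS (h ▸ hs)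
    have hat : a ≠ t := fun h => haS (h ▸ ht)
    have hbs : b ≠ s := fun h => hbS (h ▸ hs)
    have hbt : b ≠ t := fun h => hbS (h ▸ ht)
    have hAas : G.Adj a s := (hadjS s hs).1
    have hAbs : G.Adj b s := (hadjS s hs).2
    have hAat : G.Adj a t := (hadjS t ht).1
    have hAbt : G.Adj b t := (hadjS t ht).2
    have hnadj' : ¬ G.Adj b a := fun h => hnadj h.symm
    have hadjst' : ¬ G.Adj t s := fun h => hadjst h.symm
    refine ⟨![a, s, b, t], ?_, fun i => trivial, ?_⟩
    · intro i j hij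
      fin_cases i <;> fin_cases j <;> simp_all <;> tauto
    · intro i j
      fin_cases i <;> fin_cases j <;>
        simp [hAas, hAat, hAbs, hAbt, hAas.symm, hAat.symm, hAbs.symm, hAbt.symm,
          hnadj, hadjst, hnadj', hadjst', G.irrefl] <;> decide
  -- removing S minus any vertex leaves a star, hence a forest
  have hfvs : ∀ v ∈ S, G.IsFVS (S \ {v}) := by
    intro v hv
    apply star_acyclic' _ v
    rintro x y ⟨hadj, hx, hy⟩
    by_contra hcon
    push_neg at hcon
    obtain ⟨hxv, hyv⟩ := hcon
    have hxS : x ∉ S := fun h => hx ⟨h, hxv⟩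
    have hyS : y ∉ S := fun h => hy ⟨h, hyv⟩
    exact hyS (hout x hxS y hadj)
  -- {a} ∪ S is a clique in G
  have hKadj : ∀ x ∈ insert a S, ∀ y ∈ insert a S, x ≠ y → G.Adj x y := by
    rintro x (rfl | hx) y (rfl | hy) hxy
    · exact absurd rfl hxy
    · exact (hadjS y hy).1
    · exact ((hadjS x hx).1).symm
    · exact hclique x hx y hy hxy
  -- lower bound on FVS size
  have hlow : ∀ F : Set V, G.IsFVS F → S.ncard - 1 ≤ F.ncard := by
    intro F hF
    by_contra hcon
    push_neg at hcon
    have hKcard : (insert a S).ncard = S.ncard + 1 :=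
      Set.ncard_insert_of_notMem haS (Set.toFinite S)
    have h1 : (insert a S).ncard ≤ (insert a S \ F).ncard + F.ncard := by
      calc (insert a S).ncard ≤ ((insert a S \ F) ∪ F).ncard := by
            refine Set.ncard_le_ncard ?_ (Set.toFinite _)
            intro x hx
            by_cases h : x ∈ F
            · exact Or.inr h
            · exact Or.inl ⟨hx, h⟩
        _ ≤ _ := Set.ncard_union_le _ _
    have h3 : 3 ≤ (insert a S \ F).ncard := by omega
    obtain ⟨T, hTsub, hTcard⟩ := Set.exists_subset_card_eq h3
    obtain ⟨x, y, z, hxy, hxz, hyz, rfl⟩ := Set.ncard_eq_three.mp hTcard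
    have hx : x ∈ insert a S \ F := hTsub (by simp)
    have hy : y ∈ insert a S \ F := hTsub (by simp)
    have hz : z ∈ insert a S \ F := hTsub (by simp)
    exact triangle_not_acyclic' (G.removeVerts F)
      ⟨hKadj x hx.1 y hy.1 hxy, hx.2, hy.2⟩
      ⟨hKadj y hy.1 z hz.1 hyz, hy.2, hz.2⟩
      ⟨hKadj z hz.1 x hx.1 (Ne.symm hxz), hz.2, hx.2⟩ hF
  obtain ⟨v, hv⟩ := hSne
  have hcard : (S \ {v}).ncard = S.ncard - 1 :=
    Set.ncard_diff_singleton_of_mem hv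
  have hmem : S.ncard - 1 ∈ {n : ℕ | ∃ F : Set V, G.IsFVS F ∧ F.ncard = n} :=
    ⟨S \ {v}, hfvs v hv, hcard⟩
  have heq : G.minFVS = S.ncard - 1 := by
    refine le_antisymm (Nat.sInf_le hmem) (le_csInf ⟨_, hmem⟩ ?_)
    rintro n ⟨F, hF, rfl⟩
    exact hlow F hF
  refine ⟨heq, v, hv, hfvs v hv, ?_⟩
  intro F hF
  rw [hcard]
  exact hlow F hF
end

section
/- Let G be a connected (2K_2, C_4, C_5)-free graph (a connected finite simple graph with no induced 2K_2, no induced C_4 and no induced C_5) and let S be a minimal vertex separator of G. Suppose G − S has a non-trivial connected component G_1 and the induced subgraph on V(G_1) is a tree. If there exists a vertex v ∈ S with |N_G(v) ∩ V(G_1)| = 1, then S \ {v} is a minimum feedback vertex set of G, so the minimum cardinality of a feedback vertex set of G equals |S| − 1; if every vertex v ∈ S satisfies |N_G(v) ∩ V(G_1)| ≥ 2, then S is a minimum feedback vertex set of G, so the minimum cardinality equals |S|. -/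
variable {V : Type*}

namespace SimpleGraph
open Walk

variable {G : SimpleGraph V} {S : Set V}

lemma removeVerts_adj {u v : V} :
    (G.removeVerts S).Adj u v ↔ G.Adj u v ∧ u ∉ S ∧ v ∉ S := Iff.rfl

lemma support_not_mem {x y : V} (p : (G.removeVerts S).Walk x y) (hx : x ∉ S) :
    ∀ z ∈ p.support, z ∉ S := by
  induction p with
  | nil => intro z hz; simp at hz; subst hz; exact hx
  | cons h q ih =>
    intro z hz
    rcases (by simpa using hz : z = _ ∨ z ∈ q.support) with rfl | hz
    · exact hx
    · exact ih h.2.2 z hz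

lemma support_reachable {H : SimpleGraph V} {x y : V} (p : H.Walk x y) {z : V}
    (hz : z ∈ p.support) : H.Reachable x z := by
  classical
  exact ⟨p.takeUntil z hz⟩

lemma two_k2_apply (h2k2 : G.TwoK2Free) {a b c d : V}
    (hab : G.Adj a b) (hcd : G.Adj c d)
    (hac : a ≠ c) (had : a ≠ d) (hbc : b ≠ c) (hbd : b ≠ d)
    (nac : ¬ G.Adj a c) (nad : ¬ G.Adj a d) (nbc : ¬ G.Adj b c) (nbd : ¬ G.Adj b d) : False :=
  h2k2 ⟨a, b, c, d, hab.ne, hac, had, hbc, hbd, hcd.ne, hab, hcd, nac, nad, nbc, nbd⟩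

lemma no_two_edges (h2k2 : G.TwoK2Free) {x1 x2 y1 y2 : V}
    (hx : G.Adj x1 x2) (hy : G.Adj y1 y2)
    (hx1 : x1 ∉ S) (hx2 : x2 ∉ S) (hy1 : y1 ∉ S) (hy2 : y2 ∉ S)
    (hr : ¬ (G.removeVerts S).Reachable x1 y1) : False := by
  have mk : ∀ {u w : V}, G.Adj u w → u ∉ S → w ∉ S → (G.removeVerts S).Reachable u w :=
    fun h hu hw => Adj.reachable (removeVerts_adj.mpr ⟨h, hu, hw⟩)
  have rx : (G.removeVerts S).Reachable x1 x2 := mk hx hx1 hx2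
  have ry : (G.removeVerts S).Reachable y1 y2 := mk hy hy1 hy2
  have n11 : ¬ G.Adj x1 y1 := fun h => hr (mk h hx1 hy1)
  have n12 : ¬ G.Adj x1 y2 := fun h => hr ((mk h hx1 hy2).trans ry.symm)
  have n21 : ¬ G.Adj x2 y1 := fun h => hr (rx.trans (mk h hx2 hy1))
  have n22 : ¬ G.Adj x2 y2 := fun h => hr ((rx.trans (mk h hx2 hy2)).trans ry.symm)
  refine two_k2_apply h2k2 hx hy ?_ ?_ ?_ ?_ n11 n12 n21 n22
  · rintro rfl; exact hr (Reachable.refl _)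
  · rintro rfl; exact hr ry.symm
  · rintro rfl; exact hr rx
  · rintro rfl; exact hr (rx.trans ry.symm)

lemma c4_apply (hc4 : G.CkFree 4) {p q r s : V}
    (hpq : G.Adj p q) (hqr : G.Adj q r) (hrs : G.Adj r s) (hsp : G.Adj s p)
    (hpr : p ≠ r) (hqs : q ≠ s) (npr : ¬ G.Adj p r) (nqs : ¬ G.Adj q s) : False := by
  apply hc4
  refine ⟨![p, q, r, s], ?_, fun i => Set.mem_univ _, ?_⟩
  · intro i j hij
    fin_cases i <;> fin_cases j <;>
      first
        | rfl
        | exact absurd hij hpq.ne | exact absurd hij hpr | exact absurd hij hsp.ne.symm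
        | exact absurd hij hqr.ne | exact absurd hij hqs | exact absurd hij hrs.ne
        | exact absurd hij hpq.ne.symm | exact absurd hij hpr.symm | exact absurd hij hsp.ne
        | exact absurd hij hqr.ne.symm | exact absurd hij hqs.symm | exact absurd hij hrs.ne.symm
  · intro i j
    fin_cases i <;> fin_cases j <;>
      first
        | exact iff_of_false (G.loopless.irrefl _) (by decide)
        | exact iff_of_true hpq (by decide)
        | exact iff_of_true hpq.symm (by decide)
        | exact iff_of_true hqr (by decide)
        | exact iff_of_true hqr.symm (by decide)
        | exact iff_of_true hrs (by decide)
        | exact iff_of_true hrs.symm (by decide)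
        | exact iff_of_true hsp (by decide)
        | exact iff_of_true hsp.symm (by decide)
        | exact iff_of_false npr (by decide)
        | exact iff_of_false (fun h => npr h.symm) (by decide)
        | exact iff_of_false nqs (by decide)
        | exact iff_of_false (fun h => nqs h.symm) (by decide)

lemma c5_apply (hc5 : G.CkFree 5) {p q r s t : V}
    (hpq : G.Adj p q) (hqr : G.Adj q r) (hrs : G.Adj r s) (hst : G.Adj s t) (htp : G.Adj t p)
    (hpr : p ≠ r) (hps : p ≠ s) (hqs : q ≠ s) (hqt : q ≠ t) (hrt : r ≠ t)
    (npr : ¬ G.Adj p r) (nps : ¬ G.Adj p s) (nqs : ¬ G.Adj q s) (nqt : ¬ G.Adj q t)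
    (nrt : ¬ G.Adj r t) : False := by
  apply hc5
  refine ⟨![p, q, r, s, t], ?_, fun i => Set.mem_univ _, ?_⟩
  · intro i j hij
    fin_cases i <;> fin_cases j <;>
      first
        | rfl
        | exact absurd hij hpq.ne | exact absurd hij hpq.ne.symm
        | exact absurd hij hqr.ne | exact absurd hij hqr.ne.symm
        | exact absurd hij hrs.ne | exact absurd hij hrs.ne.symm
        | exact absurd hij hst.ne | exact absurd hij hst.ne.symm
        | exact absurd hij htp.ne | exact absurd hij htp.ne.symm
        | exact absurd hij hpr | exact absurd hij hpr.symm
        | exact absurd hij hps | exact absurd hij hps.symm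
        | exact absurd hij hqs | exact absurd hij hqs.symm
        | exact absurd hij hqt | exact absurd hij hqt.symm
        | exact absurd hij hrt | exact absurd hij hrt.symm
  · intro i j
    fin_cases i <;> fin_cases j <;>
      first
        | exact iff_of_false (G.loopless.irrefl _) (by decide)
        | exact iff_of_true hpq (by decide) | exact iff_of_true hpq.symm (by decide)
        | exact iff_of_true hqr (by decide) | exact iff_of_true hqr.symm (by decide)
        | exact iff_of_true hrs (by decide) | exact iff_of_true hrs.symm (by decide)
        | exact iff_of_true hst (by decide) | exact iff_of_true hst.symm (by decide)
        | exact iff_of_true htp (by decide) | exact iff_of_true htp.symm (by decide)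
        | exact iff_of_false npr (by decide) | exact iff_of_false (fun h => npr h.symm) (by decide)
        | exact iff_of_false nps (by decide) | exact iff_of_false (fun h => nps h.symm) (by decide)
        | exact iff_of_false nqs (by decide) | exact iff_of_false (fun h => nqs h.symm) (by decide)
        | exact iff_of_false nqt (by decide) | exact iff_of_false (fun h => nqt h.symm) (by decide)
        | exact iff_of_false nrt (by decide) | exact iff_of_false (fun h => nrt h.symm) (by decide)


lemma first_edge_mem {H : SimpleGraph V} {u v : V} (p : H.Walk u v) (hp : ¬ p.Nil) :
    s(u, p.getVert 1) ∈ p.edges := by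
  cases p with
  | nil => simp at hp
  | cons h q => simp [Walk.getVert_cons_succ]

lemma exists_lift_induce {A : Set V} :
    ∀ {x y : V} (p : G.Walk x y) (_ : ∀ z ∈ p.support, z ∈ A) (hx : x ∈ A) (hy : y ∈ A),
    ∃ q : (G.induce A).Walk ⟨x, hx⟩ ⟨y, hy⟩, q.map (Embedding.induce A).toHom = p := by
  intro x y p
  induction p with
  | nil => intro hs hx hy; exact ⟨.nil, rfl⟩
  | @cons x w y h q ih =>
    intro hs hx hy
    have hw : w ∈ A := hs w (by simp)
    obtain ⟨q', hq'⟩ := ih (fun z hz => hs z (by simp [hz])) hw hy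
    refine ⟨Walk.cons (show (G.induce A).Adj ⟨x, hx⟩ ⟨w, hw⟩ from h) q', ?_⟩
    simp [hq']

lemma isAcyclic_of_induce {A : Set V} (h : (G.induce A).IsAcyclic)
    {w : V} (c : G.Walk w w) (hc : c.IsCycle) (hs : ∀ z ∈ c.support, z ∈ A) : False := by
  have hw : w ∈ A := hs w c.start_mem_support
  obtain ⟨q, hq⟩ := exists_lift_induce c hs hw hw
  refine h q ?_
  rw [← Walk.map_isCycle_iff_of_injective (f := (Embedding.induce A).toHom)
      (RelEmbedding.injective _)]
  exact hq ▸ hc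

lemma cycle_start_two_nbrs {H : SimpleGraph V} {z : V} (c : H.Walk z z) (hc : c.IsCycle) :
    ∃ z1 z2, z1 ≠ z2 ∧ H.Adj z z1 ∧ H.Adj z z2 ∧ z1 ∈ c.support ∧ z2 ∈ c.support := by
  cases c with
  | nil => exact absurd hc (Walk.IsCycle.not_of_nil)
  | @cons _ w1 _ h q =>
    obtain ⟨hq, he⟩ := (Walk.cons_isCycle_iff _ _).mp hc
    have hqlen : 2 ≤ q.length := by
      have := hc.three_le_length; simp only [Walk.length_cons] at this; omega
    have hqr : ¬ q.reverse.Nil := by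
      rw [Walk.not_nil_iff_lt_length, Walk.length_reverse]; omega
    have h2 : H.Adj z (q.reverse.getVert 1) := q.reverse.adj_snd hqr
    have hw2q : q.reverse.getVert 1 ∈ q.support := by
      have : q.reverse.getVert 1 ∈ q.reverse.support :=
        Walk.mem_support_iff_exists_getVert.mpr ⟨1, rfl, by rw [Walk.length_reverse]; omega⟩
      rw [Walk.support_reverse, List.mem_reverse] at this; exact this
    have hne : w1 ≠ q.reverse.getVert 1 := by
      intro heq
      apply he
      have hmem : s(z, q.reverse.getVert 1) ∈ q.reverse.edges :=
        first_edge_mem q.reverse hqr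
      rw [Walk.edges_reverse, List.mem_reverse] at hmem
      rw [← heq] at hmem
      exact hmem
    exact ⟨w1, q.reverse.getVert 1, hne, h, h2, by simp, by simp [hw2q]⟩

lemma cycle_two_nbrs {H : SimpleGraph V} {w z : V} (c : H.Walk w w) (hc : c.IsCycle)
    (hz : z ∈ c.support) :
    ∃ z1 z2, z1 ≠ z2 ∧ H.Adj z z1 ∧ H.Adj z z2 ∧ z1 ∈ c.support ∧ z2 ∈ c.support := by
  classical
  obtain ⟨z1, z2, hne, h1, h2, m1, m2⟩ := cycle_start_two_nbrs (c.rotate z hz) (hc.rotate hz)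
  have hsub : ∀ u, u ∈ (c.rotate z hz).support → u ∈ c.support := by
    intro u hu
    rcases List.mem_cons.mp ((c.rotate z hz).support_eq_cons ▸ hu) with rfl | hu'
    · exact hz
    · have := (Walk.support_rotate c z hz).mem_iff.mp hu'
      exact List.mem_of_mem_tail this
  exact ⟨z1, z2, hne, h1, h2, hsub _ m1, hsub _ m2⟩

lemma triangle_not_acyclic {H : SimpleGraph V} {x y z : V}
    (hxy : H.Adj x y) (hyz : H.Adj y z) (hzx : H.Adj z x) : ¬ H.IsAcyclic := by
  have h1 : x ≠ y := hxy.ne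
  have h2 : y ≠ z := hyz.ne
  have h3 : z ≠ x := hzx.ne
  intro hac
  refine hac (Walk.cons hxy (Walk.cons hyz (Walk.cons hzx Walk.nil))) ?_
  rw [Walk.isCycle_def, Walk.isTrail_def]
  refine ⟨?_, by simp, ?_⟩
  · simp [Sym2.eq_iff, h1, h2, h3, h1.symm, h2.symm, h3.symm]
  · simp [h1, h2, h3, h1.symm, h2.symm, h3.symm]


lemma walk_escape {s b : V} :
    ∀ {x : V} (_w : (G.removeVerts (S \ {s})).Walk x b), x ∉ S →
    ((G.removeVerts S).Reachable x b ∨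
      ∃ y, y ∉ S ∧ (G.removeVerts S).Reachable x y ∧ G.Adj y s) := by
  intro x w
  induction w with
  | nil => intro _; exact Or.inl (Reachable.refl _)
  | @cons x z b h q ih =>
    intro hx
    by_cases hz : z = s
    · exact Or.inr ⟨x, hx, Reachable.refl _, hz ▸ h.1⟩
    · have hzS : z ∉ S := fun hzS => h.2.2 ⟨hzS, hz⟩
      have hedge : (G.removeVerts S).Reachable x z :=
        Adj.reachable (removeVerts_adj.mpr ⟨h.1, hx, hzS⟩)
      rcases ih hzS with hr | ⟨y, hy1, hy2, hy3⟩
      · exact Or.inl (hedge.trans hr)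
      · exact Or.inr ⟨y, hy1, hedge.trans hy2, hy3⟩

lemma prep {a b : V}
    (ha : a ∉ S) (hb : b ∉ S) (hnr : ¬ (G.removeVerts S).Reachable a b)
    (hmin : ∀ S' : Set V, S' ⊂ S → (G.removeVerts S').Reachable a b)
    (htrivb : ∀ y, G.Adj b y → y ∈ S) :
    ∀ s ∈ S, G.Adj s b ∧ ∃ x, x ∉ S ∧ (G.removeVerts S).Reachable a x ∧ G.Adj s x := by
  intro s hs
  have hsub : S \ {s} ⊂ S := Set.sdiff_singleton_ssubset.mpr hs
  obtain ⟨w⟩ := hmin _ hsub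
  have hA : ∃ x, x ∉ S ∧ (G.removeVerts S).Reachable a x ∧ G.Adj s x := by
    rcases walk_escape w ha with hr | ⟨y, hy1, hy2, hy3⟩
    · exact absurd hr hnr
    · exact ⟨y, hy1, hy2, hy3.symm⟩
  have hB : G.Adj s b := by
    rcases walk_escape w.reverse hb with hr | ⟨y, hy1, hy2, hy3⟩
    · exact absurd hr.symm hnr
    · have hyb : y = b := by
        obtain ⟨q⟩ := hy2
        cases q with
        | nil => rfl
        | cons h q => exact absurd (htrivb _ h.1) h.2.2
      exact (hyb ▸ hy3).symm
  exact ⟨hB, hA⟩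

lemma triv_side (h2k2 : G.TwoK2Free) {a b : V} (ha : a ∉ S) (hb : b ∉ S)
    (hnr : ¬ (G.removeVerts S).Reachable a b) :
    (∀ y, G.Adj a y → y ∈ S) ∨ (∀ y, G.Adj b y → y ∈ S) := by
  by_contra hcon
  push_neg at hcon
  obtain ⟨⟨ya, hya, hyaS⟩, ⟨yb, hyb, hybS⟩⟩ := hcon
  exact no_two_edges h2k2 hya hyb ha hyaS hb hybS hnr

section Comp
variable {C : Set V} {u0 : V}

lemma C_edge (hCdef : C = {v | (G.removeVerts S).Reachable u0 v ∧ v ∉ S}) (hu0 : u0 ∉ S)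
    (hnt : ¬ ∃ v, C = {v}) :
    ∃ e1 e2, e1 ∈ C ∧ e2 ∈ C ∧ (G.removeVerts S).Adj e1 e2 := by
  have hu0C : u0 ∈ C := by rw [hCdef]; exact ⟨Reachable.refl _, hu0⟩
  have hex : ∃ w ∈ C, w ≠ u0 := by
    by_contra hcon; push_neg at hcon
    exact hnt ⟨u0, Set.eq_singleton_iff_unique_mem.mpr ⟨hu0C, fun x hx => hcon x hx⟩⟩
  obtain ⟨w, hw, hwne⟩ := hex
  have hr : (G.removeVerts S).Reachable u0 w := by
    rw [hCdef] at hw; exact hw.1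
  obtain ⟨p⟩ := hr
  cases p with
  | nil => exact absurd rfl hwne
  | @cons _ z _ h q =>
    refine ⟨u0, z, hu0C, ?_, h⟩
    rw [hCdef]; exact ⟨Adj.reachable h, h.2.2⟩

lemma comp_trivial (h2k2 : G.TwoK2Free)
    (hCdef : C = {v | (G.removeVerts S).Reachable u0 v ∧ v ∉ S}) (hu0 : u0 ∉ S)
    (hnt : ¬ ∃ v, C = {v}) {z y : V} (hzS : z ∉ S) (hzC : z ∉ C)
    (hy : G.Adj z y) (hyS : y ∉ S) : False := by
  obtain ⟨e1, e2, he1, he2, he⟩ := C_edge hCdef hu0 hnt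
  have he1S : e1 ∉ S := by rw [hCdef] at he1; exact he1.2
  have he2S : e2 ∉ S := by rw [hCdef] at he2; exact he2.2
  have hr : ¬ (G.removeVerts S).Reachable e1 z := by
    intro hr
    have hu0e1 : (G.removeVerts S).Reachable u0 e1 := by rw [hCdef] at he1; exact he1.1
    exact hzC (by rw [hCdef]; exact ⟨hu0e1.trans hr, hzS⟩)
  exact no_two_edges h2k2 he.1 hy he1S he2S hzS hyS hr

lemma b_not_mem_C {b : V}
    (hCdef : C = {v | (G.removeVerts S).Reachable u0 v ∧ v ∉ S})
    (hnt : ¬ ∃ v, C = {v}) (htrivb : ∀ y, G.Adj b y → y ∈ S) : b ∉ C := by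
  intro hbC
  apply hnt
  refine ⟨b, ?_⟩
  have hb1 : (G.removeVerts S).Reachable u0 b := by rw [hCdef] at hbC; exact hbC.1
  ext x
  simp only [Set.mem_singleton_iff]
  constructor
  · intro hx
    have hx1 : (G.removeVerts S).Reachable u0 x := by rw [hCdef] at hx; exact hx.1
    obtain ⟨q⟩ := hb1.symm.trans hx1
    cases q with
    | nil => rfl
    | cons h q => exact absurd (htrivb _ h.1) h.2.2
  · rintro rfl; exact hbC

end Comp

lemma key (h2k2 : G.TwoK2Free) (hc4 : G.CkFree 4) (hc5 : G.CkFree 5) {b : V}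
    (htrivb : ∀ y, G.Adj b y → y ∈ S) :
    ∀ n : ℕ, ∀ s t x y : V, s ∈ S → t ∈ S → s ≠ t → ¬ G.Adj s t →
      G.Adj s b → G.Adj t b → G.Adj s x → G.Adj t y → x ∉ S → y ∉ S →
      ∀ p : (G.removeVerts S).Walk x y, p.length = n → p.IsPath → b ∉ p.support → False := by
  classical
  intro n
  induction n using Nat.strong_induction_on with
  | _ n ih =>
  intro s t x y hsS htS hst hnst hsb htb hsx hty hxS hyS p hlen hpath hbsup
  by_cases hcs : ∃ z ∈ p.support, z ≠ x ∧ G.Adj s z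
  · obtain ⟨z, hzmem, hzx, hsz⟩ := hcs
    have hzS : z ∉ S := support_not_mem p hxS z hzmem
    have hsum : (p.takeUntil z hzmem).length + (p.dropUntil z hzmem).length = p.length := by
      have h' := congrArg Walk.length (p.take_spec hzmem)
      rwa [Walk.length_append] at h'
    have htne : (p.takeUntil z hzmem).length ≠ 0 :=
      fun h0 => hzx (Walk.eq_of_length_eq_zero h0).symm
    have hlt : ((p.dropUntil z hzmem).bypass).length < n := by
      have := Walk.length_bypass_le (p.dropUntil z hzmem)
      omega
    refine ih _ hlt s t z y hsS htS hst hnst hsb htb hsz hty hzS hyS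
      ((p.dropUntil z hzmem).bypass) rfl (Walk.bypass_isPath _) ?_
    exact fun hb' => hbsup (p.support_dropUntil_subset hzmem (Walk.support_bypass_subset _ hb'))
  by_cases hct : ∃ z ∈ p.support, z ≠ y ∧ G.Adj t z
  · obtain ⟨z, hzmem, hzy, htz⟩ := hct
    have hzS : z ∉ S := support_not_mem p hxS z hzmem
    have hsum : (p.takeUntil z hzmem).length + (p.dropUntil z hzmem).length = p.length := by
      have h' := congrArg Walk.length (p.take_spec hzmem)
      rwa [Walk.length_append] at h'
    have hdne : (p.dropUntil z hzmem).length ≠ 0 :=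
      fun h0 => hzy (Walk.eq_of_length_eq_zero h0)
    have hlt : ((p.takeUntil z hzmem).bypass).length < n := by
      have := Walk.length_bypass_le (p.takeUntil z hzmem)
      omega
    refine ih _ hlt s t x z hsS htS hst hnst hsb htb hsx htz hxS hzS
      ((p.takeUntil z hzmem).bypass) rfl (Walk.bypass_isPath _) ?_
    exact fun hb' => hbsup (p.support_takeUntil_subset hzmem (Walk.support_bypass_subset _ hb'))
  push_neg at hcs hct
  cases p with
  | nil =>
    have hxb : x ≠ b := fun hh => hbsup (by rw [← hh]; simp)
    refine c4_apply hc4 hsx (hty.symm) htb (hsb.symm) hst hxb hnst ?_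
    exact fun hh => hxS (htrivb x hh.symm)
  | @cons _ z0 _ h q =>
    cases q with
    | nil =>
      have hyx : y ≠ x := (h.1.ne).symm
      have hxmem : x ∈ (Walk.cons h (Walk.nil)).support := by simp
      have hymem : y ∈ (Walk.cons h (Walk.nil)).support := by simp
      refine c5_apply hc5 hsx h.1 hty.symm htb hsb.symm
        (fun hh => hyS (hh ▸ hsS)) hst (fun hh => hxS (hh ▸ htS))
        (fun hh => hbsup (hh ▸ hxmem)) (fun hh => hbsup (hh ▸ hymem))
        (hcs y hymem hyx) hnst
        (fun hh => (hct x hxmem (fun hh2 => hyx hh2.symm)) hh.symm)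
        (fun hh => hxS (htrivb x hh.symm))
        (fun hh => hyS (htrivb y hh.symm))
    | @cons _ z1 _ h2 q2 =>
      have hz0mem : z0 ∈ (Walk.cons h (Walk.cons h2 q2)).support := by simp
      have hz1mem : z1 ∈ (Walk.cons h (Walk.cons h2 q2)).support := by
        simp only [Walk.support_cons, List.mem_cons]
        exact Or.inr (Or.inr q2.start_mem_support)
      have hz0S : z0 ∉ S := support_not_mem _ hxS z0 hz0mem
      have hz1S : z1 ∉ S := support_not_mem _ hxS z1 hz1mem
      have hz0x : z0 ≠ x := (h.1.ne).symm
      have hz1x : z1 ≠ x := by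
        have hx' : x ∉ (Walk.cons h2 q2).support := ((Walk.cons_isPath_iff _ _).mp hpath).2
        intro hh
        apply hx'
        rw [← hh]
        simp only [Walk.support_cons, List.mem_cons]
        exact Or.inr q2.start_mem_support
      exact two_k2_apply h2k2 hsb h2.1
        (fun hh => hz0S (hh ▸ hsS)) (fun hh => hz1S (hh ▸ hsS))
        (fun hh => hbsup (hh ▸ hz0mem)) (fun hh => hbsup (hh ▸ hz1mem))
        (hcs z0 hz0mem hz0x) (hcs z1 hz1mem hz1x)
        (fun hh => hz0S (htrivb z0 hh)) (fun hh => hz1S (htrivb z1 hh))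

lemma clique (h2k2 : G.TwoK2Free) (hc4 : G.CkFree 4) (hc5 : G.CkFree 5) {a b : V}
    (ha : a ∉ S) (hb : b ∉ S)
    (hnr : ¬ (G.removeVerts S).Reachable a b)
    (hmin : ∀ S' : Set V, S' ⊂ S → (G.removeVerts S').Reachable a b)
    (htrivb : ∀ y, G.Adj b y → y ∈ S) :
    ∀ s ∈ S, ∀ t ∈ S, s ≠ t → G.Adj s t := by
  classical
  intro s hs t ht hst
  by_contra hnst
  obtain ⟨hsb, x, hxS, hax, hsx⟩ := prep ha hb hnr hmin htrivb s hs
  obtain ⟨htb, y, hyS, hay, hty⟩ := prep ha hb hnr hmin htrivb t ht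
  obtain ⟨p0⟩ := hax.symm.trans hay
  have hbm : b ∉ p0.bypass.support := by
    intro hbm
    exact hnr (hax.trans (support_reachable _ (Walk.support_bypass_subset _ hbm)))
  exact key h2k2 hc4 hc5 htrivb _ s t x y hs ht hst hnst hsb htb hsx hty hxS hyS
    p0.bypass rfl (Walk.bypass_isPath _) hbm

lemma path_edge_start {H : SimpleGraph V} {x y z : V} (p : H.Walk x y) (hp : p.IsPath)
    (h : s(x, z) ∈ p.edges) : z = p.getVert 1 := by
  cases p with
  | nil => simp at h
  | @cons _ z0 _ hadj q =>
    rcases (by simpa using h : s(x, z) = s(x, z0) ∨ s(x, z) ∈ q.edges) with h' | h'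
    · rw [Sym2.eq_iff] at h'
      rcases h' with ⟨-, rfl⟩ | ⟨h1, -⟩
      · simp [Walk.getVert_cons_succ]
      · exact absurd h1 hadj.ne
    · have : x ∈ q.support := q.fst_mem_support_of_mem_edges h'
      exact absurd this ((Walk.cons_isPath_iff _ _).mp hp).2

lemma nbr_edge (h2k2 : G.TwoK2Free) (hc4 : G.CkFree 4) (hc5 : G.CkFree 5) {C : Set V}
    (hCS : ∀ z ∈ C, z ∉ S) {s : V} (hsS : s ∈ S) :
    ∀ n : ℕ, ∀ x y : V, x ∈ C → y ∈ C → x ≠ y → G.Adj s x → G.Adj s y →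
    ∀ p : (G.removeVerts S).Walk x y, p.length = n → p.IsPath → (∀ z ∈ p.support, z ∈ C) →
    ∃ x' y', x' ∈ C ∧ y' ∈ C ∧ G.Adj s x' ∧ G.Adj s y' ∧ G.Adj x' y' := by
  classical
  intro n
  induction n using Nat.strong_induction_on with
  | _ n ih =>
  intro x y hxC hyC hxy hsx hsy p hlen hpath hsupp
  by_cases hadjxy : G.Adj x y
  · exact ⟨x, y, hxC, hyC, hsx, hsy, hadjxy⟩
  -- s-chord case
  by_cases hcs : ∃ z ∈ p.support, z ≠ x ∧ z ≠ y ∧ G.Adj s z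
  · obtain ⟨z, hzmem, hzx, hzy, hsz⟩ := hcs
    have hsum : (p.takeUntil z hzmem).length + (p.dropUntil z hzmem).length = p.length := by
      have h' := congrArg Walk.length (p.take_spec hzmem)
      rwa [Walk.length_append] at h'
    have hdne : (p.dropUntil z hzmem).length ≠ 0 :=
      fun h0 => hzy (Walk.eq_of_length_eq_zero h0)
    have hlt : ((p.takeUntil z hzmem).bypass).length < n := by
      have := Walk.length_bypass_le (p.takeUntil z hzmem)
      omega
    exact ih _ hlt x z hxC (hsupp z hzmem) (fun hh => hzx hh.symm) hsx hsz
      ((p.takeUntil z hzmem).bypass) rfl (Walk.bypass_isPath _)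
      (fun w hw => hsupp w (p.support_takeUntil_subset hzmem (Walk.support_bypass_subset _ hw)))
  -- x-chord case
  by_cases hcx : ∃ z ∈ p.support, z ≠ x ∧ G.Adj x z ∧ s(x, z) ∉ p.edges
  · obtain ⟨z, hzmem, hzx, hxz, hne⟩ := hcx
    have hzC : z ∈ C := hsupp z hzmem
    have hsum : (p.takeUntil z hzmem).length + (p.dropUntil z hzmem).length = p.length := by
      have h' := congrArg Walk.length (p.take_spec hzmem)
      rwa [Walk.length_append] at h'
    have htake2 : 2 ≤ (p.takeUntil z hzmem).length := by
      rcases Nat.lt_or_ge (p.takeUntil z hzmem).length 2 with hl | hl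
      · interval_cases hl' : (p.takeUntil z hzmem).length
        · exact absurd (Walk.eq_of_length_eq_zero hl').symm hzx
        · exfalso
          apply hne
          apply p.edges_takeUntil_subset hzmem
          have hnn : ¬ (p.takeUntil z hzmem).Nil := by
            rw [Walk.not_nil_iff_lt_length]; omega
          have := first_edge_mem (p.takeUntil z hzmem) hnn
          rwa [Walk.getVert_of_length_le _ (le_of_eq hl')] at this
      · exact hl
    have hadj' : (G.removeVerts S).Adj x z := removeVerts_adj.mpr ⟨hxz, hCS x hxC, hCS z hzC⟩
    have hlt : ((Walk.cons hadj' (p.dropUntil z hzmem)).bypass).length < n := by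
      have h1 := Walk.length_bypass_le (Walk.cons hadj' (p.dropUntil z hzmem))
      rw [Walk.length_cons] at h1
      omega
    refine ih _ hlt x y hxC hyC hxy hsx hsy _ rfl (Walk.bypass_isPath _) ?_
    intro w hw
    have hw2 := Walk.support_bypass_subset _ hw
    rcases (by simpa using hw2 : w = x ∨ w ∈ (p.dropUntil z hzmem).support) with rfl | hw'
    · exact hxC
    · exact hsupp w (p.support_dropUntil_subset hzmem hw')
  -- y-chord case
  by_cases hcy : ∃ z ∈ p.support, z ≠ y ∧ G.Adj z y ∧ s(z, y) ∉ p.edges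
  · obtain ⟨z, hzmem, hzy, hzy2, hne⟩ := hcy
    have hzC : z ∈ C := hsupp z hzmem
    have hsum : (p.takeUntil z hzmem).length + (p.dropUntil z hzmem).length = p.length := by
      have h' := congrArg Walk.length (p.take_spec hzmem)
      rwa [Walk.length_append] at h'
    have hdrop2 : 2 ≤ (p.dropUntil z hzmem).length := by
      rcases Nat.lt_or_ge (p.dropUntil z hzmem).length 2 with hl | hl
      · interval_cases hl' : (p.dropUntil z hzmem).length
        · exact absurd (Walk.eq_of_length_eq_zero hl') hzy
        · exfalso
          apply hne
          apply p.edges_dropUntil_subset hzmem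
          have hnn : ¬ (p.dropUntil z hzmem).Nil := by
            rw [Walk.not_nil_iff_lt_length]; omega
          have := first_edge_mem (p.dropUntil z hzmem) hnn
          rwa [Walk.getVert_of_length_le _ (le_of_eq hl')] at this
      · exact hl
    have hadj' : (G.removeVerts S).Adj z y := removeVerts_adj.mpr ⟨hzy2, hCS z hzC, hCS y hyC⟩
    have hlt : (((p.takeUntil z hzmem).concat hadj').bypass).length < n := by
      have h1 := Walk.length_bypass_le ((p.takeUntil z hzmem).concat hadj')
      rw [Walk.length_concat] at h1
      omega
    refine ih _ hlt x y hxC hyC hxy hsx hsy _ rfl (Walk.bypass_isPath _) ?_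
    intro w hw
    have hw2 := Walk.support_bypass_subset _ hw
    have hw3 : w ∈ (p.takeUntil z hzmem).support ∨ w = y := by
      simpa [Walk.support_concat, List.concat_eq_append] using hw2
    rcases hw3 with hw' | rfl
    · exact hsupp w (p.support_takeUntil_subset hzmem hw')
    · exact hyC
  push_neg at hcs hcx hcy
  cases p with
  | nil => exact absurd rfl hxy
  | @cons _ z0 _ h q =>
    cases q with
    | nil => exact absurd h.1 hadjxy
    | @cons _ z1 _ h2 q2 =>
      cases q2 with
      | nil =>
        -- x -- z0 -- y
        have hz0mem : z0 ∈ (Walk.cons h (Walk.cons h2 Walk.nil)).support := by simp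
        exact (c4_apply hc4 hsx h.1 h2.1 hsy.symm
          (fun hh => (hCS z0 (hsupp z0 hz0mem)) (hh ▸ hsS)) hxy
          (hcs z0 hz0mem h.1.ne' h2.1.ne) hadjxy).elim
      | @cons _ z2 _ h3 q3 =>
        have hp1 := (Walk.cons_isPath_iff _ _).mp hpath
        have hp2 := (Walk.cons_isPath_iff _ _).mp hp1.1
        cases q3 with
        | nil =>
          -- x -- z0 -- z1 -- y
          have hz0mem : z0 ∈ (Walk.cons h (Walk.cons h2 (Walk.cons h3 Walk.nil))).support := by
            simp
          have hz1mem : z1 ∈ (Walk.cons h (Walk.cons h2 (Walk.cons h3 Walk.nil))).support := by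
            simp
          have hz1x : z1 ≠ x := by
            intro hh; subst hh; exact hp1.2 (by simp)
          have hz0y : z0 ≠ y := by
            intro hh; subst hh; exact hp2.2 (by simp)
          refine absurd (?_ : False) not_false
          refine c5_apply hc5 hsx h.1 h2.1 h3.1 hsy.symm
            (fun hh => (hCS z0 (hsupp z0 hz0mem)) (hh ▸ hsS))
            (fun hh => (hCS z1 (hsupp z1 hz1mem)) (hh ▸ hsS))
            (fun hh => hz1x hh.symm) hxy hz0y
            (hcs z0 hz0mem h.1.ne' hz0y)
            (hcs z1 hz1mem hz1x h3.1.ne)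
            ?_ hadjxy ?_
          · intro hh
            have hme := hcx z1 hz1mem hz1x hh
            have := path_edge_start _ hpath hme
            simp only [Walk.getVert_cons_succ, Walk.getVert_zero] at this
            exact h2.1.ne this.symm
          · intro hh
            have hme := hcy z0 hz0mem hz0y hh
            have hme' : s(y, z0) ∈ (Walk.cons h (Walk.cons h2 (Walk.cons h3 Walk.nil))).reverse.edges := by
              rw [Walk.edges_reverse, List.mem_reverse, Sym2.eq_swap]
              exact hme
            have hthis := path_edge_start _ hpath.reverse hme'
            have hgv : (Walk.cons h (Walk.cons h2 (Walk.cons h3 Walk.nil))).reverse.getVert 1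
                = z1 := by
              rw [Walk.getVert_reverse]
              norm_num [Walk.getVert_cons_succ, Walk.getVert_zero]
            rw [hgv] at hthis
            exact h2.1.ne hthis
        | @cons _ z3 _ h4 q4 =>
          -- length ≥ 4 : x z0 z1 z2 z3 ... y
          have hp3 := (Walk.cons_isPath_iff _ _).mp hp2.1
          have hp4 := (Walk.cons_isPath_iff _ _).mp hp3.1
          have hz1mem : z1 ∈ (Walk.cons h (Walk.cons h2 (Walk.cons h3 (Walk.cons h4 q4)))).support := by
            simp
          have hz2mem : z2 ∈ (Walk.cons h (Walk.cons h2 (Walk.cons h3 (Walk.cons h4 q4)))).support := by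
            simp
          have hz1x : z1 ≠ x := by
            intro hh; subst hh; exact hp1.2 (by simp)
          have hz2x : z2 ≠ x := by
            intro hh; subst hh; exact hp1.2 (by simp)
          have hz1y : z1 ≠ y := by
            intro hh; subst hh; exact hp3.2 (Walk.end_mem_support _)
          have hz2y : z2 ≠ y := by
            intro hh; subst hh; exact hp4.2 (Walk.end_mem_support _)
          have hz0z2 : z0 ≠ z2 := by
            intro hh; subst hh; exact hp2.2 (by simp)
          refine absurd (?_ : False) not_false
          refine two_k2_apply h2k2 hsx h3.1
            (fun hh => (hCS z1 (hsupp z1 hz1mem)) (hh ▸ hsS))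
            (fun hh => (hCS z2 (hsupp z2 hz2mem)) (hh ▸ hsS))
            (fun hh => hz1x hh.symm) (fun hh => hz2x hh.symm)
            (hcs z1 hz1mem hz1x hz1y) (hcs z2 hz2mem hz2x hz2y) ?_ ?_
          · intro hh
            have hme := hcx z1 hz1mem hz1x hh
            have := path_edge_start _ hpath hme
            simp only [Walk.getVert_cons_succ, Walk.getVert_zero] at this
            exact h2.1.ne this.symm
          · intro hh
            have hme := hcx z2 hz2mem hz2x hh
            have := path_edge_start _ hpath hme
            simp only [Walk.getVert_cons_succ, Walk.getVert_zero] at this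
            exact hz0z2 this.symm

lemma removeVerts_le {W : Set V} : G.removeVerts W ≤ G := fun _ _ h => h.1

lemma support_mapLe {H H' : SimpleGraph V} (hle : H ≤ H') {x y : V} (p : H.Walk x y) :
    (p.mapLe hle).support = p.support := by
  simp only [Walk.mapLe, Walk.support_map, Hom.ofLE]
  exact List.map_id' p.support

lemma isFVS_S (h2k2 : G.TwoK2Free) {C : Set V} {u0 : V}
    (hCdef : C = {v | (G.removeVerts S).Reachable u0 v ∧ v ∉ S}) (hu0 : u0 ∉ S)
    (hnt : ¬ ∃ v, C = {v}) (htree : (G.induce C).IsTree) : G.IsFVS S := by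
  intro w c hc
  have hsup : ∀ z ∈ c.support, z ∈ C := by
    intro z hz
    obtain ⟨z1, z2, hne, h1, h2, m1, m2⟩ := cycle_two_nbrs c hc hz
    have hzS : z ∉ S := h1.2.1
    by_contra hzC
    exact comp_trivial h2k2 hCdef hu0 hnt hzS hzC h1.1 h1.2.2
  refine isAcyclic_of_induce htree.2 (c.mapLe removeVerts_le) (hc.mapLe _) ?_
  intro z hz
  rw [support_mapLe] at hz
  exact hsup z hz

lemma isFVS_Sv (h2k2 : G.TwoK2Free) {C : Set V} {u0 : V}
    (hCdef : C = {v | (G.removeVerts S).Reachable u0 v ∧ v ∉ S}) (hu0 : u0 ∉ S)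
    (hnt : ¬ ∃ v, C = {v}) (htree : (G.induce C).IsTree) {v c0 : V} (_hvS : v ∈ S)
    (hone : (G.neighborSet v ∩ C) = {c0}) : G.IsFVS (S \ {v}) := by
  intro w c hc
  have hB : ∀ z ∈ c.support, z ∉ S → z ∈ C := by
    intro z hz hzS
    by_contra hzC
    obtain ⟨z1, z2, hne, h1, h2, m1, m2⟩ := cycle_two_nbrs c hc hz
    have hv1 : z1 = v := by
      by_cases hmem : z1 ∈ S
      · by_contra hne1; exact h1.2.2 ⟨hmem, hne1⟩
      · exact (comp_trivial h2k2 hCdef hu0 hnt hzS hzC h1.1 hmem).elim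
    have hv2 : z2 = v := by
      by_cases hmem : z2 ∈ S
      · by_contra hne2; exact h2.2.2 ⟨hmem, hne2⟩
      · exact (comp_trivial h2k2 hCdef hu0 hnt hzS hzC h2.1 hmem).elim
    exact hne (hv1.trans hv2.symm)
  have hvsup : v ∉ c.support := by
    intro hv
    obtain ⟨z1, z2, hne, h1, h2, m1, m2⟩ := cycle_two_nbrs c hc hv
    have hz1S : z1 ∉ S := by
      intro hmem
      have hval : z1 = v := by by_contra hne1; exact h1.2.2 ⟨hmem, hne1⟩
      exact h1.1.ne hval.symm
    have hz2S : z2 ∉ S := by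
      intro hmem
      have hval : z2 = v := by by_contra hne2; exact h2.2.2 ⟨hmem, hne2⟩
      exact h2.1.ne hval.symm
    have hz1C := hB z1 m1 hz1S
    have hz2C := hB z2 m2 hz2S
    have e1 : z1 = c0 := by
      have hm : z1 ∈ G.neighborSet v ∩ C := ⟨h1.1, hz1C⟩
      rw [hone] at hm; exact hm
    have e2 : z2 = c0 := by
      have hm : z2 ∈ G.neighborSet v ∩ C := ⟨h2.1, hz2C⟩
      rw [hone] at hm; exact hm
    exact hne (e1.trans e2.symm)
  have hsup : ∀ z ∈ c.support, z ∈ C := by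
    intro z hz
    obtain ⟨z1, z2, hne, h1, h2, m1, m2⟩ := cycle_two_nbrs c hc hz
    have hzS : z ∉ S := by
      intro hmem
      have hzv : z = v := by by_contra hne1; exact h1.2.1 ⟨hmem, hne1⟩
      exact hvsup (hzv ▸ hz)
    exact hB z hz hzS
  refine isAcyclic_of_induce htree.2 (c.mapLe removeVerts_le) (hc.mapLe _) ?_
  intro z hz
  rw [support_mapLe] at hz
  exact hsup z hz

lemma fvs_clique_bound [Fintype V] {K F : Set V}
    (hK : ∀ x ∈ K, ∀ y ∈ K, x ≠ y → G.Adj x y) (hF : G.IsFVS F) :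
    K.ncard ≤ (K ∩ F).ncard + 2 := by
  have hdiff : (K \ F).ncard ≤ 2 := by
    by_contra hgt
    push_neg at hgt
    have h1 : (K \ F).Nonempty := by
      rw [Set.nonempty_iff_ne_empty]; intro h0; rw [h0] at hgt; simp at hgt
    obtain ⟨x, hx⟩ := h1
    have h2 : 2 ≤ ((K \ F) \ {x}).ncard := by
      rw [Set.ncard_diff_singleton_of_mem hx]; omega
    have h2' : ((K \ F) \ {x}).Nonempty := by
      rw [Set.nonempty_iff_ne_empty]; intro h0; rw [h0] at h2; simp at h2
    obtain ⟨y, hy⟩ := h2'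
    have h3 : 1 ≤ (((K \ F) \ {x}) \ {y}).ncard := by
      rw [Set.ncard_diff_singleton_of_mem hy]; omega
    have h3' : (((K \ F) \ {x}) \ {y}).Nonempty := by
      rw [Set.nonempty_iff_ne_empty]; intro h0; rw [h0] at h3; simp at h3
    obtain ⟨z, hz⟩ := h3'
    have hyKF : y ∈ K \ F := hy.1
    have hzKF : z ∈ K \ F := hz.1.1
    have hyx : y ≠ x := hy.2
    have hzx : z ≠ x := hz.1.2
    have hzy : z ≠ y := hz.2
    have a1 : (G.removeVerts F).Adj x y :=
      removeVerts_adj.mpr ⟨hK x hx.1 y hyKF.1 (Ne.symm hyx), hx.2, hyKF.2⟩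
    have a2 : (G.removeVerts F).Adj y z :=
      removeVerts_adj.mpr ⟨hK y hyKF.1 z hzKF.1 (Ne.symm hzy), hyKF.2, hzKF.2⟩
    have a3 : (G.removeVerts F).Adj z x :=
      removeVerts_adj.mpr ⟨hK z hzKF.1 x hx.1 hzx, hzKF.2, hx.2⟩
    exact triangle_not_acyclic a1 a2 a3 hF
  have hun : K.ncard ≤ (K ∩ F).ncard + (K \ F).ncard := by
    conv_lhs => rw [← Set.inter_union_diff K F]
    exact Set.ncard_union_le _ _
  omega

lemma minFVS_eq [Fintype V] {F0 : Set V} (hF0 : G.IsFVS F0)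
    (hlb : ∀ F, G.IsFVS F → F0.ncard ≤ F.ncard) : G.minFVS = F0.ncard := by
  have hmem : F0.ncard ∈ {n : ℕ | ∃ F : Set V, G.IsFVS F ∧ F.ncard = n} := ⟨F0, hF0, rfl⟩
  rw [minFVS]
  apply le_antisymm
  · exact Nat.sInf_le hmem
  · apply le_csInf ⟨F0.ncard, hmem⟩
    rintro n ⟨F, hF, rfl⟩
    exact hlb F hF

end SimpleGraph

open SimpleGraph in
theorem stmt13 [Fintype V] (G : SimpleGraph V) (S C : Set V)
    (hconn : G.Connected) (h2k2 : G.TwoK2Free) (hc4 : G.CkFree 4) (hc5 : G.CkFree 5)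
    (hS : G.IsMinSep S) (hC : G.IsCompOf S C) (hnt : ¬ ∃ v, C = {v})
    (htree : (G.induce C).IsTree) :
    (∀ v ∈ S, (G.neighborSet v ∩ C).ncard = 1 →
      G.IsFVS (S \ {v}) ∧ (∀ F : Set V, G.IsFVS F → (S \ {v}).ncard ≤ F.ncard) ∧
      G.minFVS = S.ncard - 1) ∧
    ((∀ v ∈ S, 2 ≤ (G.neighborSet v ∩ C).ncard) →
      G.IsFVS S ∧ (∀ F : Set V, G.IsFVS F → S.ncard ≤ F.ncard) ∧
      G.minFVS = S.ncard) := by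
  classical
  obtain ⟨u0, hu0, hCdef⟩ := hC
  obtain ⟨a0, b0, ha0, hb0, hnr0, hmin0⟩ := hS
  have hsym : ∃ a b : V, a ∉ S ∧ b ∉ S ∧ ¬(G.removeVerts S).Reachable a b ∧
      (∀ S' : Set V, S' ⊂ S → (G.removeVerts S').Reachable a b) ∧
      (∀ y, G.Adj b y → y ∈ S) := by
    rcases triv_side h2k2 ha0 hb0 hnr0 with hta | htb
    · exact ⟨b0, a0, hb0, ha0, fun r => hnr0 r.symm, fun S' h => (hmin0 S' h).symm, hta⟩
    · exact ⟨a0, b0, ha0, hb0, hnr0, hmin0, htb⟩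
  obtain ⟨a, b, ha, hb, hnr, hmin, htrivb⟩ := hsym
  have hbC : b ∉ C := b_not_mem_C hCdef hnt htrivb
  have hCS : ∀ z ∈ C, z ∉ S := by
    intro z hz; rw [hCdef] at hz; exact hz.2
  have hprep := prep ha hb hnr hmin htrivb
  have hclq := clique h2k2 hc4 hc5 ha hb hnr hmin htrivb
  have hK : ∀ x ∈ insert b S, ∀ y ∈ insert b S, x ≠ y → G.Adj x y := by
    intro x hx y hy hxy
    rcases hx with rfl | hx
    · rcases hy with rfl | hy
      · exact absurd rfl hxy
      · exact ((hprep y hy).1).symm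
    · rcases hy with rfl | hy
      · exact (hprep x hx).1
      · exact hclq x hx y hy hxy
  have hKcard : (insert b S).ncard = S.ncard + 1 :=
    Set.ncard_insert_of_notMem hb (Set.toFinite _)
  have hKinter : ∀ F : Set V, ((insert b S) ∩ F).ncard ≤ F.ncard :=
    fun F => Set.ncard_le_ncard Set.inter_subset_right (Set.toFinite _)
  constructor
  · intro v hv hone
    obtain ⟨c0, hc0⟩ := Set.ncard_eq_one.mp hone
    have hFVS := isFVS_Sv h2k2 hCdef hu0 hnt htree hv hc0
    have hcard : (S \ {v}).ncard = S.ncard - 1 :=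
      Set.ncard_diff_singleton_of_mem hv
    have hlbv : ∀ F, G.IsFVS F → (S \ {v}).ncard ≤ F.ncard := by
      intro F hF
      have h2 := fvs_clique_bound hK hF
      have h3 := hKinter F
      omega
    exact ⟨hFVS, hlbv, by rw [minFVS_eq hFVS hlbv, hcard]⟩
  · intro hall
    have hFVS := isFVS_S h2k2 hCdef hu0 hnt htree
    have hlbS : ∀ F, G.IsFVS F → S.ncard ≤ F.ncard := by
      intro F hF
      by_cases hSF : S ⊆ F
      · exact Set.ncard_le_ncard hSF (Set.toFinite _)
      obtain ⟨s1, hs1S, hs1F⟩ := Set.not_subset.mp hSF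
      -- two distinct neighbors of s1 in C
      have h2n : 1 < (G.neighborSet s1 ∩ C).ncard := hall s1 hs1S
      obtain ⟨x, y, hx, hy, hxy⟩ := (Set.one_lt_ncard_iff (Set.toFinite _)).mp h2n
      have hxC : x ∈ C := hx.2
      have hyC : y ∈ C := hy.2
      have hsx : G.Adj s1 x := hx.1
      have hsy : G.Adj s1 y := hy.1
      have hrx : (G.removeVerts S).Reachable u0 x := by rw [hCdef] at hxC; exact hxC.1
      have hry : (G.removeVerts S).Reachable u0 y := by rw [hCdef] at hyC; exact hyC.1
      obtain ⟨p0⟩ := hrx.symm.trans hry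
      have hsupp : ∀ z ∈ p0.bypass.support, z ∈ C := by
        intro z hz
        have hz' := Walk.support_bypass_subset _ hz
        have h1 : (G.removeVerts S).Reachable x z := support_reachable _ hz'
        have h2 : z ∉ S := support_not_mem p0 (hCS x hxC) z hz'
        rw [hCdef]; exact ⟨hrx.trans h1, h2⟩
      obtain ⟨x', y', hx'C, hy'C, hsx', hsy', hxy'⟩ :=
        nbr_edge h2k2 hc4 hc5 hCS hs1S _ x y hxC hyC hxy hsx hsy
          p0.bypass rfl (Walk.bypass_isPath _) hsupp
      -- F must contain x' or y'
      have hw : ∃ w, w ∈ F ∧ w ∈ C := by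
        by_cases h1 : x' ∈ F
        · exact ⟨x', h1, hx'C⟩
        by_cases h2 : y' ∈ F
        · exact ⟨y', h2, hy'C⟩
        exfalso
        have a1 : (G.removeVerts F).Adj s1 x' := removeVerts_adj.mpr ⟨hsx', hs1F, h1⟩
        have a2 : (G.removeVerts F).Adj x' y' := removeVerts_adj.mpr ⟨hxy', h1, h2⟩
        have a3 : (G.removeVerts F).Adj y' s1 := removeVerts_adj.mpr ⟨hsy'.symm, h2, hs1F⟩
        exact triangle_not_acyclic a1 a2 a3 hF
      obtain ⟨w, hwF, hwC⟩ := hw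
      have hwK : w ∉ (insert b S) ∩ F := by
        rintro ⟨hmem, -⟩
        rcases hmem with rfl | hmem
        · exact hbC hwC
        · exact hCS w hwC hmem
      have hsub : insert w ((insert b S) ∩ F) ⊆ F := by
        intro u hu
        rcases hu with rfl | hu
        · exact hwF
        · exact hu.2
      have hcard2 : ((insert b S) ∩ F).ncard + 1 ≤ F.ncard := by
        rw [← Set.ncard_insert_of_notMem hwK (Set.toFinite _)]
        exact Set.ncard_le_ncard hsub (Set.toFinite _)
      have h2 := fvs_clique_bound hK hF
      omega
    exact ⟨hFVS, hlbS, minFVS_eq hFVS hlbS⟩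
end

section
/- Let G be a connected (2K_2, C_3)-free graph (a connected finite simple graph with no induced 2K_2 and no induced C_3), let S be a minimal vertex separator of G, and let G_1 be a non-trivial connected component of G − S. Then for every vertex x ∈ S, the set N_G(x) ∩ V(G_1) is an independent set of G, and any two distinct vertices u, v ∈ N_G(x) ∩ V(G_1) are at distance exactly 2 in the induced subgraph on V(G_1), i.e., u and v are non-adjacent and have a common neighbor in V(G_1). -/
variable {V : Type*}

private lemma triFree (G : SimpleGraph V) (hc3 : G.CkFree 3) {a b c : V}
    (hab : G.Adj a b) (hbc : G.Adj b c) (hac : G.Adj a c) : False := by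
  apply hc3
  refine ⟨![a, b, c], ?_, fun i => trivial, ?_⟩
  · intro i j hij
    fin_cases i <;> fin_cases j <;>
      simp_all [hab.ne, hbc.ne, hac.ne, hab.ne', hbc.ne', hac.ne']
  · intro i j
    fin_cases i <;> fin_cases j <;>
      simp [hab, hbc, hac, hab.symm, hbc.symm, hac.symm, G.irrefl] <;> decide

private lemma exists_walk_getVert {G : SimpleGraph V} {u v : V} (p : G.Walk u v) (n : ℕ) :
    ∃ q : G.Walk u (p.getVert n), q.length ≤ n := by
  induction p generalizing n with
  | nil => exact ⟨SimpleGraph.Walk.nil.copy rfl rfl, by simp⟩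
  | cons h q ih =>
    cases n with
    | zero => exact ⟨SimpleGraph.Walk.nil.copy rfl (by simp), by simp⟩
    | succ n =>
      obtain ⟨r, hr⟩ := ih n
      exact ⟨(SimpleGraph.Walk.cons h r).copy rfl (SimpleGraph.Walk.getVert_cons_succ _ _).symm,
        by simpa using Nat.succ_le_succ hr⟩

private lemma length_drop_le {G : SimpleGraph V} {u v : V} (p : G.Walk u v) (n : ℕ) :
    (p.drop n).length ≤ p.length - n := by
  induction p generalizing n with
  | nil => simp [SimpleGraph.Walk.drop]
  | cons h q ih =>
    cases n with
    | zero => simp [SimpleGraph.Walk.drop]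
    | succ n => simpa [SimpleGraph.Walk.drop, Nat.succ_sub_succ] using ih n

open SimpleGraph in
private lemma no_shortcut {G : SimpleGraph V} {u v : V} (w : G.Walk u v)
    (hw : w.length = G.dist u v) {i j : ℕ} (hij : i + 2 ≤ j) (hj : j ≤ w.length) :
    ¬ G.Adj (w.getVert i) (w.getVert j) := by
  intro hadj
  obtain ⟨q, hq⟩ := exists_walk_getVert w i
  have hle := SimpleGraph.dist_le (q.append (SimpleGraph.Walk.cons hadj (w.drop j)))
  rw [SimpleGraph.Walk.length_append, SimpleGraph.Walk.length_cons] at hle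
  have hd := length_drop_le w j
  omega

open SimpleGraph in
private lemma no_coincide {G : SimpleGraph V} {u v : V} (w : G.Walk u v)
    (hw : w.length = G.dist u v) {i j : ℕ} (hij : i < j) (hj : j ≤ w.length) :
    w.getVert i ≠ w.getVert j := by
  intro heq
  obtain ⟨q, hq⟩ := exists_walk_getVert w i
  have hle := SimpleGraph.dist_le (q.append ((w.drop j).copy heq.symm rfl))
  rw [SimpleGraph.Walk.length_append, SimpleGraph.Walk.length_copy] at hle
  have hd := length_drop_le w j
  omega

private lemma walk_avoid {G : SimpleGraph V} {S : Set V} {x : V} :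
    ∀ {c d : V} (q : (G.removeVerts (S \ {x})).Walk c d), x ∉ q.support → c ∉ S →
      (G.removeVerts S).Reachable c d := by
  intro c d q
  induction q with
  | nil => exact fun _ _ => SimpleGraph.Reachable.refl _
  | @cons c c' d h q ih =>
    intro hx hc
    rw [SimpleGraph.Walk.support_cons] at hx
    have hx' : x ∉ q.support := fun h' => hx (List.mem_cons_of_mem _ h')
    have hc' : c' ∉ S := by
      intro hcS
      apply h.2.2
      refine Set.mem_diff_singleton.mpr ⟨hcS, fun he => ?_⟩
      subst he
      exact hx' q.start_mem_support
    exact ((show (G.removeVerts S).Adj c c' from ⟨h.1, hc, hc'⟩).reachable).trans (ih hx' hc')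

private lemma side_nbr {G : SimpleGraph V} {S : Set V} {x c : V} (hxc : x ≠ c)
    (q : (G.removeVerts (S \ {x})).Walk x c) (hq : q.IsPath) (hc : c ∉ S) :
    ∃ y, G.Adj x y ∧ y ∉ S ∧ (G.removeVerts S).Reachable y c := by
  have hnn : ¬ q.Nil := SimpleGraph.Walk.not_nil_of_ne hxc
  have hadj : (G.removeVerts (S \ {x})).Adj x (q.getVert 1) :=
    SimpleGraph.Walk.adj_snd hnn
  have hxt : x ∉ q.tail.support := by
    rw [SimpleGraph.Walk.support_tail_of_not_nil _ hnn]
    have := hq.support_nodup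
    rw [q.support_eq_cons] at this
    exact (List.nodup_cons.mp this).1
  have hyne : q.getVert 1 ≠ x := hadj.ne'
  have hyS : q.getVert 1 ∉ S := fun hS => hadj.2.2 ⟨hS, hyne⟩
  exact ⟨q.getVert 1, hadj.1, hyS, walk_avoid q.tail hxt hyS⟩

private lemma exists_sep_nbr (G : SimpleGraph V) {S : Set V} (hS : G.IsMinSep S) {x : V}
    (hx : x ∈ S) {u : V} (hu : u ∉ S) :
    ∃ y, G.Adj x y ∧ y ∉ S ∧ ¬ (G.removeVerts S).Reachable y u := by
  classical
  obtain ⟨a, b, ha, hb, hnr, hmin⟩ := hS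
  obtain ⟨w⟩ := hmin (S \ {x}) (Set.sdiff_singleton_ssubset.mpr hx)
  have hxs : x ∈ w.toPath.1.support := by
    by_contra hxs
    exact hnr (walk_avoid w.toPath.1 hxs ha)
  have hxa : x ≠ a := fun h => ha (h ▸ hx)
  have hxb : x ≠ b := fun h => hb (h ▸ hx)
  obtain ⟨yb, hb1, hb2, hb3⟩ :=
    side_nbr hxb (w.toPath.1.dropUntil x hxs) (w.toPath.2.dropUntil hxs) hb
  obtain ⟨ya, ha1, ha2, ha3⟩ :=
    side_nbr hxa (w.toPath.1.takeUntil x hxs).reverse ((w.toPath.2.takeUntil hxs).reverse) ha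
  by_cases hya : (G.removeVerts S).Reachable ya u
  · exact ⟨yb, hb1, hb2, fun hyb => hnr ((ha3.symm.trans hya).trans (hyb.symm.trans hb3))⟩
  · exact ⟨ya, ha1, ha2, hya⟩

theorem stmt14 [Fintype V] (G : SimpleGraph V) (S C : Set V)
    (hconn : G.Connected) (h2k2 : G.TwoK2Free) (hc3 : G.CkFree 3)
    (hS : G.IsMinSep S) (hC : G.IsCompOf S C) (hnt : ¬ ∃ v, C = {v}) :
    ∀ x ∈ S,
      (∀ u ∈ G.neighborSet x ∩ C, ∀ v ∈ G.neighborSet x ∩ C, ¬ G.Adj u v) ∧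
      (∀ u ∈ G.neighborSet x ∩ C, ∀ v ∈ G.neighborSet x ∩ C, u ≠ v →
        ¬ G.Adj u v ∧ ∃ w ∈ C, G.Adj u w ∧ G.Adj w v) := by
  obtain ⟨u0, hu0, rfl⟩ := hC
  intro x hx
  have key : ∀ u ∈ G.neighborSet x ∩ {v : V | (G.removeVerts S).Reachable u0 v ∧ v ∉ S},
      ∀ v ∈ G.neighborSet x ∩ {v : V | (G.removeVerts S).Reachable u0 v ∧ v ∉ S},
      ¬ G.Adj u v := by
    intro u hu v hv hadj
    exact triFree G hc3 hu.1 hadj hv.1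
  refine ⟨key, ?_⟩
  intro u hu v hv huv
  have hnadj : ¬ G.Adj u v := key u hu v hv
  refine ⟨hnadj, ?_⟩
  set G' := G.removeVerts S with hG'
  have hru : G'.Reachable u0 u := hu.2.1
  have hrv : G'.Reachable u0 v := hv.2.1
  have huS : u ∉ S := hu.2.2
  have hvS : v ∉ S := hv.2.2
  have hxu : G.Adj x u := hu.1
  have hxv : G.Adj x v := hv.1
  obtain ⟨w, hw⟩ := (hru.symm.trans hrv).exists_walk_length_eq_dist
  have h0 : w.length ≠ 0 := fun h => huv (SimpleGraph.Walk.eq_of_length_eq_zero h)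
  have h1 : w.length ≠ 1 := by
    intro h
    have hadj := w.adj_getVert_succ (i := 0) (by omega)
    rw [SimpleGraph.Walk.getVert_zero, show (0 + 1 : ℕ) = w.length from h.symm,
      SimpleGraph.Walk.getVert_length] at hadj
    exact hnadj hadj.1
  by_cases hk2 : w.length = 2
  · -- distance two: middle vertex is a common neighbor
    have a1 := w.adj_getVert_succ (i := 0) (by omega)
    rw [SimpleGraph.Walk.getVert_zero] at a1
    have a2 := w.adj_getVert_succ (i := 1) (by omega)
    rw [show (1 + 1 : ℕ) = w.length from hk2.symm, SimpleGraph.Walk.getVert_length] at a2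
    exact ⟨w.getVert 1, ⟨hru.trans a1.reachable, a1.2.2⟩, a1.1, a2.1⟩
  · exfalso
    by_cases hk3 : w.length = 3
    · -- distance three: contradiction with 2K2 using x and a vertex on the other side
      have a1 := w.adj_getVert_succ (i := 0) (by omega)
      rw [SimpleGraph.Walk.getVert_zero] at a1
      have a2 := w.adj_getVert_succ (i := 1) (by omega)
      have a3 := w.adj_getVert_succ (i := 2) (by omega)
      rw [show (2 + 1 : ℕ) = w.length from hk3.symm, SimpleGraph.Walk.getVert_length] at a3
      obtain ⟨y, hxy, hyS, hyu⟩ := exists_sep_nbr G hS hx huS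
      set p1 := w.getVert 1
      set p2 := w.getVert 2
      have hrup1 : G'.Reachable u p1 := a1.reachable
      have hrup2 : G'.Reachable u p2 := a1.reachable.trans a2.reachable
      refine h2k2 ⟨p1, p2, x, y, a2.ne, fun h => (h ▸ a1.2.2) hx, ?_, ?_, ?_,
        fun h => hyS (h ▸ hx), a2.1, hxy, ?_, ?_, ?_, ?_⟩
      · exact fun h => hyu (h ▸ hrup1.symm)
      · exact fun h => (h ▸ a2.2.2) hx
      · exact fun h => hyu (h ▸ hrup2.symm)
      · exact fun h => triFree G hc3 hxu a1.1 h.symm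
      · exact fun h => hyu ((show G'.Adj p1 y from ⟨h, a1.2.2, hyS⟩).symm.reachable.trans
          hrup1.symm)
      · exact fun h => triFree G hc3 hxv a3.1.symm h.symm
      · exact fun h => hyu ((show G'.Adj p2 y from ⟨h, a2.2.2, hyS⟩).symm.reachable.trans
          hrup2.symm)
    · -- distance at least four: 2K2 from the two end edges
      have hk4 : 4 ≤ w.length := by omega
      have a1 := w.adj_getVert_succ (i := 0) (by omega)
      rw [SimpleGraph.Walk.getVert_zero] at a1
      have a2 := w.adj_getVert_succ (i := w.length - 1) (by omega)
      rw [show w.length - 1 + 1 = w.length from by omega,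
        SimpleGraph.Walk.getVert_length] at a2
      set g1 := w.getVert 1
      set g3 := w.getVert (w.length - 1)
      have nuv : ¬ G'.Adj u v := fun h => hnadj h.1
      have n13 : ¬ G'.Adj g1 g3 := no_shortcut w hw (by omega) (by omega)
      have n03 : ¬ G'.Adj u g3 := by
        have := no_shortcut w hw (i := 0) (j := w.length - 1) (by omega) (by omega)
        rwa [SimpleGraph.Walk.getVert_zero] at this
      have n1v : ¬ G'.Adj g1 v := by
        have := no_shortcut w hw (i := 1) (j := w.length) (by omega) (by omega)
        rwa [SimpleGraph.Walk.getVert_length] at this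
      have e03 : u ≠ g3 := by
        have := no_coincide w hw (i := 0) (j := w.length - 1) (by omega) (by omega)
        rwa [SimpleGraph.Walk.getVert_zero] at this
      have e13 : g1 ≠ g3 := no_coincide w hw (by omega) (by omega)
      have e1v : g1 ≠ v := by
        have := no_coincide w hw (i := 1) (j := w.length) (by omega) (by omega)
        rwa [SimpleGraph.Walk.getVert_length] at this
      exact h2k2 ⟨u, g1, g3, v, a1.ne, e03, huv, e13, e1v, a2.ne, a1.1, a2.1,
        fun h => n03 ⟨h, huS, a2.2.1⟩, fun h => nuv ⟨h, huS, hvS⟩,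
        fun h => n13 ⟨h, a1.2.2, a2.2.1⟩, fun h => n1v ⟨h, a1.2.2, hvS⟩⟩
end

section
/- Let G be a connected (2K_2, C_3)-free graph (a connected finite simple graph with no induced 2K_2 and no induced C_3), let S be a minimal vertex separator of G, and let G_1 be a non-trivial connected component of G − S. Then the induced subgraph on V(G_1) has no induced cycle on 5 vertices; moreover, the induced subgraph on V(G_1) ∪ S has no induced cycle on 5 vertices. -/
variable {V : Type*}

lemma noTri_s16 {G : SimpleGraph V} (hc3 : G.CkFree 3) {x y z : V}
    (hxy : G.Adj x y) (hyz : G.Adj y z) (hxz : G.Adj x z) : False := by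
  apply hc3
  refine ⟨![x, y, z], ?_, fun i => Set.mem_univ _, ?_⟩
  · have h1 := hxy.ne; have h2 := hyz.ne; have h3 := hxz.ne
    intro i j hij
    fin_cases i <;> fin_cases j <;> simp_all
  · intro i j
    have h1 := hxy.symm; have h2 := hyz.symm; have h3 := hxz.symm
    fin_cases i <;> fin_cases j <;> simp_all [hxy, hyz, hxz]

lemma no2K2 {G : SimpleGraph V} (h : G.TwoK2Free) {a b c d : V}
    (hab : G.Adj a b) (hcd : G.Adj c d)
    (hac : ¬G.Adj a c) (had : ¬G.Adj a d) (hbc : ¬G.Adj b c) (hbd : ¬G.Adj b d)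
    (h1 : a ≠ c) (h2 : a ≠ d) (h3 : b ≠ c) (h4 : b ≠ d) : False :=
  h ⟨a, b, c, d, hab.ne, h1, h2, h3, h4, hcd.ne, hab, hcd, hac, had, hbc, hbd⟩

lemma sepAdj {G : SimpleGraph V} {S : Set V} {a b : V} (haS : a ∉ S)
    (hnr : ¬ (G.removeVerts S).Reachable a b)
    (hmin : ∀ S' : Set V, S' ⊂ S → (G.removeVerts S').Reachable a b)
    {s : V} (hs : s ∈ S) :
    ∃ x, x ∉ S ∧ (G.removeVerts S).Reachable a x ∧ G.Adj x s := by
  have hsub : S \ {s} ⊂ S := ⟨Set.diff_subset, fun h => (h hs).2 rfl⟩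
  obtain ⟨wk⟩ := hmin _ hsub
  suffices H : ∀ (v w : V), (G.removeVerts (S \ {s})).Walk v w → v ∉ S →
      (G.removeVerts S).Reachable a v → ¬(G.removeVerts S).Reachable a w →
      ∃ x, x ∉ S ∧ (G.removeVerts S).Reachable a x ∧ G.Adj x s from
    H a b wk haS (SimpleGraph.Reachable.refl a) hnr
  intro v w wk'
  induction wk' with
  | nil => intro hv hr hnw; exact absurd hr hnw
  | @cons v' c w' h p ih =>
    intro hv hr hnw
    by_cases hc : c = s
    · exact ⟨v', hv, hr, hc ▸ h.1⟩
    · have hcS : c ∉ S := fun hcS => h.2.2 ⟨hcS, hc⟩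
      exact ih hcS (hr.trans (SimpleGraph.Adj.reachable ⟨h.1, hv, hcS⟩)) hnw

/-- The hard case: `f j, f (j+2) ∈ S`, the rest of the cycle in `C`. -/
lemma hardCase {G : SimpleGraph V} {S C : Set V} {d : V} {f : Fin 5 → V}
    (h2k2 : G.TwoK2Free) (hc3 : G.CkFree 3)
    (hfinj : Function.Injective f)
    (hadj : ∀ i j : Fin 5, G.Adj (f i) (f j) ↔ (j = i + 1 ∨ i = j + 1))
    (hdS : d ∉ S) (hdC : d ∉ C)
    (hSd : ∀ s ∈ S, G.Adj d s)
    (hCS : ∀ x ∈ C, x ∉ S)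
    (hF1 : ∀ x ∈ C, ∀ y, y ∉ S → y ∉ C → ¬ G.Adj x y)
    (hnbr : ∀ v ∈ C, ∃ w ∈ C, G.Adj v w)
    (j : Fin 5) (hj : f j ∈ S) (hj2 : f (j + 2) ∈ S)
    (h1C : f (j + 1) ∈ C) (h3C : f (j + 3) ∈ C) (h4C : f (j + 4) ∈ C) : False := by
  have nadj : ∀ p q : Fin 5, ¬(q = p + 1 ∨ p = q + 1) → ¬ G.Adj (f p) (f q) :=
    fun p q h hA => h ((hadj p q).1 hA)
  have adjc : ∀ p q : Fin 5, (q = p + 1 ∨ p = q + 1) → G.Adj (f p) (f q) :=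
    fun p q h => (hadj p q).2 h
  obtain ⟨g, hgC, hgadj⟩ := hnbr (f (j + 1)) h1C
  -- basic facts about g
  have hgS : g ∉ S := hCS g hgC
  have hgd : ¬ G.Adj g d := hF1 g hgC d hdS hdC
  have hgdne : g ≠ d := fun h => hdC (h ▸ hgC)
  have hgj : g ≠ f j := fun h => hgS (h ▸ hj)
  have hgj2 : g ≠ f (j + 2) := fun h => hgS (h ▸ hj2)
  have hgj3 : g ≠ f (j + 3) := fun h =>
    nadj (j+1) (j+3) ((by decide : ∀ i : Fin 5, ¬(i+3 = i+1+1 ∨ i+1 = i+3+1)) j) (h ▸ hgadj)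
  have hgj4 : g ≠ f (j + 4) := fun h =>
    nadj (j+1) (j+4) ((by decide : ∀ i : Fin 5, ¬(i+4 = i+1+1 ∨ i+1 = i+4+1)) j) (h ▸ hgadj)
  have hg0 : ¬ G.Adj g (f j) := fun h =>
    noTri_s16 hc3 hgadj.symm (adjc (j+1) j (Or.inr rfl)) h
  have hg2 : ¬ G.Adj g (f (j + 2)) := fun h =>
    noTri_s16 hc3 hgadj.symm (adjc (j+1) (j+2) (Or.inl ((by decide : ∀ i : Fin 5, i+2 = i+1+1) j))) h
  have hdj3 : ¬ G.Adj d (f (j + 3)) := fun h => hF1 _ h3C d hdS hdC h.symm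
  have hdj4 : ¬ G.Adj d (f (j + 4)) := fun h => hF1 _ h4C d hdS hdC h.symm
  by_cases hg3 : G.Adj g (f (j + 3))
  · -- 2K2 on (g, f(j+3)) and (d, f j)
    exact no2K2 h2k2 hg3 (hSd _ hj)
      hgd hg0 (fun h => hdj3 h.symm)
      (nadj (j+3) j ((by decide : ∀ i : Fin 5, ¬(i = i+3+1 ∨ i+3 = i+1)) j))
      hgdne hgj (fun h => hdC (h.symm ▸ h3C))
      (hfinj.ne ((by decide : ∀ i : Fin 5, i+3 ≠ i) j))
  · by_cases hg4 : G.Adj g (f (j + 4))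
    · -- 2K2 on (g, f(j+4)) and (d, f(j+2))
      exact no2K2 h2k2 hg4 (hSd _ hj2)
        hgd hg2 (fun h => hdj4 h.symm)
        (nadj (j+4) (j+2) ((by decide : ∀ i : Fin 5, ¬(i+2 = i+4+1 ∨ i+4 = i+2+1)) j))
        hgdne hgj2 (fun h => hdC (h.symm ▸ h4C))
        (hfinj.ne ((by decide : ∀ i : Fin 5, i+4 ≠ i+2) j))
    · -- 2K2 on (f(j+1), g) and (f(j+3), f(j+4))
      exact no2K2 h2k2 hgadj (adjc (j+3) (j+4) (Or.inl ((by decide : ∀ i : Fin 5, i+4 = i+3+1) j)))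
        (nadj (j+1) (j+3) ((by decide : ∀ i : Fin 5, ¬(i+3 = i+1+1 ∨ i+1 = i+3+1)) j))
        (nadj (j+1) (j+4) ((by decide : ∀ i : Fin 5, ¬(i+4 = i+1+1 ∨ i+1 = i+4+1)) j))
        hg3 hg4
        (hfinj.ne ((by decide : ∀ i : Fin 5, i+1 ≠ i+3) j))
        (hfinj.ne ((by decide : ∀ i : Fin 5, i+1 ≠ i+4) j))
        hgj3 hgj4

theorem stmt16 [Fintype V] (G : SimpleGraph V) (S C : Set V)
    (hconn : G.Connected) (h2k2 : G.TwoK2Free) (hc3 : G.CkFree 3)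
    (hS : G.IsMinSep S) (hC : G.IsCompOf S C) (hnt : ¬ ∃ v, C = {v}) :
    ¬ G.HasInducedCycleOn C 5 ∧ ¬ G.HasInducedCycleOn (C ∪ S) 5 := by
  obtain ⟨a, b, haS, hbS, hnr, hmin⟩ := hS
  obtain ⟨u, huS, hCdef⟩ := hC
  have huC : u ∈ C := by rw [hCdef]; exact ⟨SimpleGraph.Reachable.refl u, huS⟩
  have hCS : ∀ x ∈ C, x ∉ S := by intro x hx; rw [hCdef] at hx; exact hx.2
  have hCreach : ∀ x ∈ C, (G.removeVerts S).Reachable u x := by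
    intro x hx; rw [hCdef] at hx; exact hx.1
  have hF1 : ∀ x ∈ C, ∀ y, y ∉ S → y ∉ C → ¬ G.Adj x y := by
    intro x hx y hyS hyC hadj
    apply hyC; rw [hCdef]
    exact ⟨(hCreach x hx).trans (SimpleGraph.Adj.reachable ⟨hadj, hCS x hx, hyS⟩), hyS⟩
  have hnbr : ∀ v ∈ C, ∃ w ∈ C, G.Adj v w := by
    intro v hv
    have hex : ∃ w ∈ C, w ≠ v := by
      by_contra h; push_neg at h
      exact hnt ⟨v, Set.eq_singleton_iff_unique_mem.2 ⟨hv, h⟩⟩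
    obtain ⟨w, hwC, hwv⟩ := hex
    obtain ⟨p⟩ := (hCreach v hv).symm.trans (hCreach w hwC)
    cases p with
    | nil => exact absurd rfl hwv
    | @cons _ c _ h q =>
      refine ⟨c, ?_, h.1⟩
      rw [hCdef]
      exact ⟨(hCreach v hv).trans (SimpleGraph.Adj.reachable h), h.2.2⟩
  -- pick d ∈ {a, b} outside C
  have hab' : a ∉ C ∨ b ∉ C := by
    by_contra h; push_neg at h
    exact hnr ((hCreach a h.1).symm.trans (hCreach b h.2))
  obtain ⟨d, hdS, hdC, hdkey⟩ :
      ∃ d, d ∉ S ∧ d ∉ C ∧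
        ∀ s ∈ S, ∃ x, x ∉ S ∧ (G.removeVerts S).Reachable d x ∧ G.Adj x s := by
    rcases hab' with hd | hd
    · exact ⟨a, haS, hd, fun s hs => sepAdj haS hnr hmin hs⟩
    · exact ⟨b, hbS, hd, fun s hs =>
        sepAdj hbS (fun h => hnr h.symm) (fun S' hS' => (hmin S' hS').symm) hs⟩
  have key : ¬ G.HasInducedCycleOn (C ∪ S) 5 := by
    rintro ⟨f, hfinj, hfmem, hadj⟩
    have nadj : ∀ p q : Fin 5, ¬(q = p + 1 ∨ p = q + 1) → ¬ G.Adj (f p) (f q) :=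
      fun p q h hA => h ((hadj p q).1 hA)
    have adjc : ∀ p q : Fin 5, (q = p + 1 ∨ p = q + 1) → G.Adj (f p) (f q) :=
      fun p q h => (hadj p q).2 h
    by_cases hA : ∃ y, G.Adj d y ∧ y ∉ S ∧ y ∉ C
    · obtain ⟨y, hy1, hy2, hy3⟩ := hA
      obtain ⟨c2, hc2C, hc2⟩ := hnbr u huC
      exact no2K2 h2k2 hy1 hc2
        (fun h => hF1 u huC d hdS hdC h.symm)
        (fun h => hF1 c2 hc2C d hdS hdC h.symm)
        (fun h => hF1 u huC y hy2 hy3 h.symm)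
        (fun h => hF1 c2 hc2C y hy2 hy3 h.symm)
        (fun h => hdC (h ▸ huC)) (fun h => hdC (h ▸ hc2C))
        (fun h => hy3 (h ▸ huC)) (fun h => hy3 (h ▸ hc2C))
    · push_neg at hA
      have hNd : ∀ y, G.Adj d y → y ∈ S := by
        intro y hy
        by_contra hyS
        exact hF1 y (hA y hy hyS) d hdS hdC hy.symm
      have hSd : ∀ s ∈ S, G.Adj d s := by
        intro s hs
        obtain ⟨x, hxS, hxr, hxadj⟩ := hdkey s hs
        have hxd : x = d := by
          obtain ⟨p⟩ := hxr
          cases p with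
          | nil => rfl
          | cons h q => exact absurd (hNd _ h.1) h.2.2
        exact hxd ▸ hxadj
      have hmem : ∀ i, f i ∈ C ∨ f i ∈ S := fun i => hfmem i
      have hdf : ∀ i, d ≠ f i := fun i h =>
        (hmem i).elim (fun hc => hdC (h ▸ hc)) (fun hs => hdS (h ▸ hs))
      have hdnadjC : ∀ i, f i ∈ C → ¬ G.Adj d (f i) :=
        fun i hi h => hF1 _ hi d hdS hdC h.symm
      have hSC : ∀ i, f i ∈ S → f (i + 1) ∈ C := by
        intro i hi
        rcases hmem (i+1) with h | h
        · exact h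
        · exact absurd (noTri_s16 hc3 (hSd _ hi) (adjc i (i+1) (Or.inl rfl)) (hSd _ h)) not_false
      have hSC' : ∀ i, f i ∈ S → f (i + 4) ∈ C := by
        intro i hi
        rcases hmem (i+4) with h | h
        · exact h
        · exact absurd (noTri_s16 hc3 (hSd _ h)
            (adjc (i+4) i (Or.inl ((by decide : ∀ i : Fin 5, i = i+4+1) i))) (hSd _ hi)) not_false
      by_cases hex : ∃ i, f i ∈ S
      · obtain ⟨i, hi⟩ := hex
        have h1C : f (i + 1) ∈ C := hSC i hi
        have h4C : f (i + 4) ∈ C := hSC' i hi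
        by_cases h2 : f (i + 2) ∈ S
        · have h3C : f (i + 3) ∈ C := by
            have := hSC (i+2) h2
            rwa [(by decide : ∀ i : Fin 5, i+2+1 = i+3) i] at this
          exact hardCase h2k2 hc3 hfinj hadj hdS hdC hSd hCS hF1 hnbr i hi h2 h1C h3C h4C
        · have h2C : f (i + 2) ∈ C := (hmem _).resolve_right h2
          by_cases h3 : f (i + 3) ∈ S
          · -- hard case at j = i + 3
            refine hardCase h2k2 hc3 hfinj hadj hdS hdC hSd hCS hF1 hnbr (i+3) h3 ?_ ?_ ?_ ?_
            · rwa [(by decide : ∀ i : Fin 5, i+3+2 = i) i]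
            · rwa [(by decide : ∀ i : Fin 5, i+3+1 = i+4) i]
            · rwa [(by decide : ∀ i : Fin 5, i+3+3 = i+1) i]
            · rwa [(by decide : ∀ i : Fin 5, i+3+4 = i+2) i]
          · have h3C : f (i + 3) ∈ C := (hmem _).resolve_right h3
            exact no2K2 h2k2 (hSd _ hi)
              (adjc (i+2) (i+3) (Or.inl ((by decide : ∀ i : Fin 5, i+3 = i+2+1) i)))
              (hdnadjC _ h2C) (hdnadjC _ h3C)
              (nadj i (i+2) ((by decide : ∀ i : Fin 5, ¬(i+2 = i+1 ∨ i = i+2+1)) i))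
              (nadj i (i+3) ((by decide : ∀ i : Fin 5, ¬(i+3 = i+1 ∨ i = i+3+1)) i))
              (hdf _) (hdf _)
              (fun h => hCS _ h2C (h.symm ▸ hi)) (fun h => hCS _ h3C (h.symm ▸ hi))
      · push_neg at hex
        have hfC : ∀ i, f i ∈ C := fun i => (hmem i).resolve_right (hex i)
        have hSne : S.Nonempty := by
          by_contra h
          rw [Set.not_nonempty_iff_eq_empty] at h
          subst h
          apply hnr
          have he : G.removeVerts (∅ : Set V) = G := by
            ext x y; simp [SimpleGraph.removeVerts]
          rw [he]
          exact hconn.preconnected a b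
        obtain ⟨s, hsS⟩ := hSne
        have hds : G.Adj d s := hSd s hsS
        have hsf : ∀ i, s ≠ f i := fun i h => hex i (h ▸ hsS)
        have hdnf : ∀ i, ¬ G.Adj d (f i) := fun i => hdnadjC i (hfC i)
        have tri2 : ∀ i : Fin 5, G.Adj s (f i) → G.Adj s (f (i + 1)) → False :=
          fun i h h' => noTri_s16 hc3 h (adjc i (i+1) (Or.inl rfl)) h'
        have freeEdge : ∃ j : Fin 5, ¬G.Adj s (f j) ∧ ¬G.Adj s (f (j + 1)) := by
          by_cases h0 : G.Adj s (f 0)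
          · have h1 : ¬G.Adj s (f 1) := fun h =>
              tri2 0 h0 (by rwa [(by decide : (0:Fin 5)+1 = 1)])
            have h4 : ¬G.Adj s (f 4) := fun h =>
              tri2 4 h (by rwa [(by decide : (4:Fin 5)+1 = 0)])
            by_cases h2 : G.Adj s (f 2)
            · have h3 : ¬G.Adj s (f 3) := fun h =>
                tri2 2 h2 (by rwa [(by decide : (2:Fin 5)+1 = 3)])
              exact ⟨3, h3, by rwa [(by decide : (3:Fin 5)+1 = 4)]⟩
            · exact ⟨1, h1, by rwa [(by decide : (1:Fin 5)+1 = 2)]⟩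
          · by_cases h1 : G.Adj s (f 1)
            · have h2 : ¬G.Adj s (f 2) := fun h =>
                tri2 1 h1 (by rwa [(by decide : (1:Fin 5)+1 = 2)])
              by_cases h3 : G.Adj s (f 3)
              · have h4 : ¬G.Adj s (f 4) := fun h =>
                  tri2 3 h3 (by rwa [(by decide : (3:Fin 5)+1 = 4)])
                exact ⟨4, h4, by rwa [(by decide : (4:Fin 5)+1 = 0)]⟩
              · exact ⟨2, h2, by rwa [(by decide : (2:Fin 5)+1 = 3)]⟩
            · exact ⟨0, h0, by rwa [(by decide : (0:Fin 5)+1 = 1)]⟩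
        obtain ⟨j, hj1, hj2⟩ := freeEdge
        exact no2K2 h2k2 hds (adjc j (j+1) (Or.inl rfl))
          (hdnf j) (hdnf (j+1)) hj1 hj2
          (hdf j) (hdf (j+1)) (hsf j) (hsf (j+1))
  exact ⟨fun ⟨f, h1, h2, h3⟩ => key ⟨f, h1, fun i => Or.inl (h2 i), h3⟩, key⟩
end

section
/- Let G be a connected (2K_2, C_4)-free graph (a connected finite simple graph with no induced 2K_2 and no induced C_4) and let S be a minimal vertex separator of G. Then every independent set of the induced subgraph on S has at most two vertices, and the induced subgraph on S contains neither an induced path on 4 vertices nor an induced star K_{1,3}. -/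
variable {V : Type*}

section Helpers

open SimpleGraph

variable {G : SimpleGraph V}

/-- Finding an induced `C₄` gives a contradiction with `C₄`-freeness. -/
private lemma c4_contra (hc4 : G.CkFree 4) {u p v q : V}
    (huv : u ≠ v) (hpq : p ≠ q)
    (aup : G.Adj u p) (apv : G.Adj p v) (avq : G.Adj v q) (aqu : G.Adj q u)
    (nuv : ¬ G.Adj u v) (npq : ¬ G.Adj p q) : False := by
  have nvu : ¬ G.Adj v u := fun h => nuv h.symm
  have nqp : ¬ G.Adj q p := fun h => npq h.symm
  have luu : ¬ G.Adj u u := G.irrefl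
  have lpp : ¬ G.Adj p p := G.irrefl
  have lvv : ¬ G.Adj v v := G.irrefl
  have lqq : ¬ G.Adj q q := G.irrefl
  apply hc4
  refine ⟨![u,p,v,q], ?_, fun i => trivial, ?_⟩
  · intro i j h
    fin_cases i <;> fin_cases j <;> simp_all
  · intro i j
    fin_cases i <;> fin_cases j <;>
      first
        | exact iff_of_true aup (by decide)
        | exact iff_of_true aup.symm (by decide)
        | exact iff_of_true apv (by decide)
        | exact iff_of_true apv.symm (by decide)
        | exact iff_of_true avq (by decide)
        | exact iff_of_true avq.symm (by decide)
        | exact iff_of_true aqu (by decide)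
        | exact iff_of_true aqu.symm (by decide)
        | exact iff_of_false luu (by decide)
        | exact iff_of_false lpp (by decide)
        | exact iff_of_false lvv (by decide)
        | exact iff_of_false lqq (by decide)
        | exact iff_of_false nuv (by decide)
        | exact iff_of_false nvu (by decide)
        | exact iff_of_false npq (by decide)
        | exact iff_of_false nqp (by decide)

/-- Finding an induced `2K₂` gives a contradiction with `2K₂`-freeness. -/
private lemma k2_contra (h2k2 : G.TwoK2Free) {a b c d : V}
    (hab : a ≠ b) (hac : a ≠ c) (had : a ≠ d) (hbc : b ≠ c) (hbd : b ≠ d) (hcd : c ≠ d)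
    (eab : G.Adj a b) (ecd : G.Adj c d)
    (nac : ¬ G.Adj a c) (nad : ¬ G.Adj a d) (nbc : ¬ G.Adj b c) (nbd : ¬ G.Adj b d) :
    False :=
  h2k2 ⟨a, b, c, d, hab, hac, had, hbc, hbd, hcd, eab, ecd, nac, nad, nbc, nbd⟩

variable {S X Y : Set V}

/-- If `u, v ∈ S` are nonadjacent and have no common neighbour in `Y`, then any two of
their respective neighbours in `Y` are adjacent. -/
private lemma L2 (h2k2 : G.TwoK2Free)
    (hSY : ∀ ⦃s⦄, s ∈ S → s ∉ Y)
    {u v : V} (hu : u ∈ S) (hv : v ∈ S) (huv : u ≠ v) (nuv : ¬ G.Adj u v)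
    (hno : ∀ y ∈ Y, ¬ (G.Adj u y ∧ G.Adj v y))
    {uy vy : V} (huy : uy ∈ Y) (auy : G.Adj u uy) (hvy : vy ∈ Y) (avy : G.Adj v vy) :
    G.Adj uy vy := by
  by_contra hadj
  have h1 : ¬ G.Adj u vy := fun h => hno vy hvy ⟨h, avy⟩
  have h2 : ¬ G.Adj uy v := fun h => hno uy huy ⟨auy, h.symm⟩
  have hne : uy ≠ vy := by rintro rfl; exact hno uy huy ⟨auy, avy⟩
  have d1 : u ≠ vy := by rintro rfl; exact hSY hu hvy
  have d2 : uy ≠ v := by rintro rfl; exact hSY hv huy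
  have d3 : v ≠ vy := by rintro rfl; exact hSY hv hvy
  exact k2_contra h2k2 auy.ne huv d1 d2 hne d3 auy avy nuv h1 h2 hadj

/-- Any two nonadjacent vertices of `S` have a common neighbour in `X` or in `Y`. -/
private lemma EX (h2k2 : G.TwoK2Free)
    (hXY : ∀ ⦃x⦄, x ∈ X → ∀ ⦃y⦄, y ∈ Y → ¬ G.Adj x y ∧ x ≠ y)
    (hSX : ∀ ⦃s⦄, s ∈ S → s ∉ X) (hSY : ∀ ⦃s⦄, s ∈ S → s ∉ Y)
    (hNX : ∀ ⦃s⦄, s ∈ S → ∃ x ∈ X, G.Adj s x) (hNY : ∀ ⦃s⦄, s ∈ S → ∃ y ∈ Y, G.Adj s y)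
    {u v : V} (hu : u ∈ S) (hv : v ∈ S) (huv : u ≠ v) (nuv : ¬ G.Adj u v) :
    (∃ x ∈ X, G.Adj u x ∧ G.Adj v x) ∨ (∃ y ∈ Y, G.Adj u y ∧ G.Adj v y) := by
  by_contra hcon
  push_neg at hcon
  obtain ⟨hnoX, hnoY⟩ := hcon
  obtain ⟨ux, hux, aux⟩ := hNX hu
  obtain ⟨vx, hvx, avx⟩ := hNX hv
  obtain ⟨uy, huy, auy⟩ := hNY hu
  obtain ⟨vy, hvy, avy⟩ := hNY hv
  have eX : G.Adj ux vx := L2 h2k2 hSX hu hv huv nuv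
    (fun x hx ⟨h1, h2⟩ => hnoX x hx h1 h2) hux aux hvx avx
  have eY : G.Adj uy vy := L2 h2k2 hSY hu hv huv nuv
    (fun y hy ⟨h1, h2⟩ => hnoY y hy h1 h2) huy auy hvy avy
  exact k2_contra h2k2 eX.ne (hXY hux huy).2 (hXY hux hvy).2 (hXY hvx huy).2
    (hXY hvx hvy).2 eY.ne eX eY (hXY hux huy).1 (hXY hux hvy).1 (hXY hvx huy).1
    (hXY hvx hvy).1

/-- Two nonadjacent vertices of `S` cannot have common neighbours in both `X` and `Y`. -/
private lemma NB (hc4 : G.CkFree 4)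
    (hXY : ∀ ⦃x⦄, x ∈ X → ∀ ⦃y⦄, y ∈ Y → ¬ G.Adj x y ∧ x ≠ y)
    {u v p q : V} (huv : u ≠ v) (nuv : ¬ G.Adj u v)
    (hp : p ∈ X) (aup : G.Adj u p) (avp : G.Adj v p)
    (hq : q ∈ Y) (auq : G.Adj u q) (avq : G.Adj v q) : False :=
  c4_contra hc4 huv (hXY hp hq).2 aup avp.symm avq auq.symm nuv (hXY hp hq).1

/-- Key case analysis for independent triples. -/
private lemma keyH (h2k2 : G.TwoK2Free) (hc4 : G.CkFree 4)
    (hXY : ∀ ⦃x⦄, x ∈ X → ∀ ⦃y⦄, y ∈ Y → ¬ G.Adj x y ∧ x ≠ y)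
    (hSX : ∀ ⦃s⦄, s ∈ S → s ∉ X) (hSY : ∀ ⦃s⦄, s ∈ S → s ∉ Y)
    (hNY : ∀ ⦃s⦄, s ∈ S → ∃ y ∈ Y, G.Adj s y)
    {u v w p p' : V} (hu : u ∈ S) (hv : v ∈ S) (hw : w ∈ S)
    (huv : u ≠ v) (huw : u ≠ w) (hvw : v ≠ w)
    (nuv : ¬ G.Adj u v) (nuw : ¬ G.Adj u w) (nvw : ¬ G.Adj v w)
    (hpX : p ∈ X) (aup : G.Adj u p) (avp : G.Adj v p)
    (hp'X : p' ∈ X) (avp' : G.Adj v p') (awp' : G.Adj w p') : False := by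
  by_cases hcase : ∃ r ∈ Y, G.Adj u r ∧ G.Adj w r
  · obtain ⟨r, hr, aur, awr⟩ := hcase
    have nvr : ¬ G.Adj v r := fun h => NB hc4 hXY huv nuv hpX aup avp hr aur h
    have nup' : ¬ G.Adj u p' := fun h =>
      NB hc4 hXY huw nuw hp'X h awp' hr aur awr
    -- 2K2 on edges (u,r) and (v,p')
    have d1 : u ≠ r := by rintro rfl; exact hSY hu hr
    have d2 : u ≠ p' := by rintro rfl; exact hSX hu hp'X
    have d3 : r ≠ v := by rintro rfl; exact hSY hv hr
    have d4 : v ≠ p' := by rintro rfl; exact hSX hv hp'X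
    exact k2_contra h2k2 d1 huv d2 d3 (hXY hp'X hr).2.symm d4
      aur avp' nuv nup' (fun h => nvr h.symm) (fun h => (hXY hp'X hr).1 h.symm)
  · push_neg at hcase
    have nuvY : ∀ r ∈ Y, ¬ (G.Adj u r ∧ G.Adj v r) := fun r hr ⟨h1, h2⟩ =>
      NB hc4 hXY huv nuv hpX aup avp hr h1 h2
    have nvwY : ∀ r ∈ Y, ¬ (G.Adj v r ∧ G.Adj w r) := fun r hr ⟨h1, h2⟩ =>
      NB hc4 hXY hvw nvw hp'X avp' awp' hr h1 h2
    obtain ⟨vy, hvy, avy⟩ := hNY hv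
    obtain ⟨wy, hwy, awy⟩ := hNY hw
    have evw : G.Adj vy wy := L2 h2k2 hSY hv hw hvw nvw nvwY hvy avy hwy awy
    have nuvy : ¬ G.Adj u vy := fun h => nuvY vy hvy ⟨h, avy⟩
    have nuwy : ¬ G.Adj u wy := fun h => hcase wy hwy h awy
    -- 2K2 on edges (u,p) and (vy,wy)
    have d1 : u ≠ vy := by rintro rfl; exact hSY hu hvy
    have d2 : u ≠ wy := by rintro rfl; exact hSY hu hwy
    exact k2_contra h2k2 aup.ne d1 d2 (hXY hpX hvy).2 (hXY hpX hwy).2 evw.ne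
      aup evw nuvy nuwy (hXY hpX hvy).1 (hXY hpX hwy).1

/-- No independent triple in `S`. -/
private lemma noTriple (h2k2 : G.TwoK2Free) (hc4 : G.CkFree 4)
    (hXY : ∀ ⦃x⦄, x ∈ X → ∀ ⦃y⦄, y ∈ Y → ¬ G.Adj x y ∧ x ≠ y)
    (hSX : ∀ ⦃s⦄, s ∈ S → s ∉ X) (hSY : ∀ ⦃s⦄, s ∈ S → s ∉ Y)
    (hNX : ∀ ⦃s⦄, s ∈ S → ∃ x ∈ X, G.Adj s x) (hNY : ∀ ⦃s⦄, s ∈ S → ∃ y ∈ Y, G.Adj s y)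
    {u v w : V} (hu : u ∈ S) (hv : v ∈ S) (hw : w ∈ S)
    (huv : u ≠ v) (huw : u ≠ w) (hvw : v ≠ w)
    (nuv : ¬ G.Adj u v) (nuw : ¬ G.Adj u w) (nvw : ¬ G.Adj v w) : False := by
  have hYX : ∀ ⦃y⦄, y ∈ Y → ∀ ⦃x⦄, x ∈ X → ¬ G.Adj y x ∧ y ≠ x := fun y hy x hx =>
    ⟨fun h => (hXY hx hy).1 h.symm, fun h => (hXY hx hy).2 h.symm⟩
  have nvu : ¬ G.Adj v u := fun h => nuv h.symm
  have nwu : ¬ G.Adj w u := fun h => nuw h.symm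
  have nwv : ¬ G.Adj w v := fun h => nvw h.symm
  rcases EX h2k2 hXY hSX hSY hNX hNY hu hv huv nuv with
    ⟨p1, hp1, a1, b1⟩ | ⟨p1, hp1, a1, b1⟩ <;>
  rcases EX h2k2 hXY hSX hSY hNX hNY hu hw huw nuw with
    ⟨p2, hp2, a2, b2⟩ | ⟨p2, hp2, a2, b2⟩ <;>
  rcases EX h2k2 hXY hSX hSY hNX hNY hv hw hvw nvw with
    ⟨p3, hp3, a3, b3⟩ | ⟨p3, hp3, a3, b3⟩
  -- sides: (uv, uw, vw)
  · -- XXX : pairs uv,uw share u : keyH v u w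
    exact keyH h2k2 hc4 hXY hSX hSY hNY hv hu hw huv.symm hvw huw nvu nvw nuw
      hp1 b1 a1 hp2 a2 b2
  · -- XXY
    exact keyH h2k2 hc4 hXY hSX hSY hNY hv hu hw huv.symm hvw huw nvu nvw nuw
      hp1 b1 a1 hp2 a2 b2
  · -- XYX : pairs uv,vw share v : keyH u v w
    exact keyH h2k2 hc4 hXY hSX hSY hNY hu hv hw huv huw hvw nuv nuw nvw
      hp1 a1 b1 hp3 a3 b3
  · -- XYY : pairs uw,vw share w (side Y) : keyH u w v  with sides swapped
    exact keyH h2k2 hc4 hYX hSY hSX hNX hu hw hv huw huv hvw.symm nuw nuv nwv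
      hp2 a2 b2 hp3 b3 a3
  · -- YXX : pairs uw,vw share w (side X) : keyH u w v
    exact keyH h2k2 hc4 hXY hSX hSY hNY hu hw hv huw huv hvw.symm nuw nuv nwv
      hp2 a2 b2 hp3 b3 a3
  · -- YXY : pairs uv,vw share v (side Y) : keyH u v w swapped
    exact keyH h2k2 hc4 hYX hSY hSX hNX hu hv hw huv huw hvw nuv nuw nvw
      hp1 a1 b1 hp3 a3 b3
  · -- YYX : pairs uv,uw share u (side Y) : keyH v u w swapped
    exact keyH h2k2 hc4 hYX hSY hSX hNX hv hu hw huv.symm hvw huw nvu nvw nuw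
      hp1 b1 a1 hp2 a2 b2
  · -- YYY
    exact keyH h2k2 hc4 hYX hSY hSX hNX hv hu hw huv.symm hvw huw nvu nvw nuw
      hp1 b1 a1 hp2 a2 b2

/-- No induced `P₄` in `S`. -/
private lemma noP4 (h2k2 : G.TwoK2Free) (hc4 : G.CkFree 4)
    (hXY : ∀ ⦃x⦄, x ∈ X → ∀ ⦃y⦄, y ∈ Y → ¬ G.Adj x y ∧ x ≠ y)
    (hSX : ∀ ⦃s⦄, s ∈ S → s ∉ X) (hSY : ∀ ⦃s⦄, s ∈ S → s ∉ Y)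
    (hNX : ∀ ⦃s⦄, s ∈ S → ∃ x ∈ X, G.Adj s x) (hNY : ∀ ⦃s⦄, s ∈ S → ∃ y ∈ Y, G.Adj s y)
    {a b c d : V} (ha : a ∈ S) (hb : b ∈ S) (hc : c ∈ S) (hd : d ∈ S)
    (hab : a ≠ b) (hac : a ≠ c) (had : a ≠ d) (hbc : b ≠ c) (hbd : b ≠ d) (hcd : c ≠ d)
    (eab : G.Adj a b) (ebc : G.Adj b c) (ecd : G.Adj c d)
    (nac : ¬ G.Adj a c) (nad : ¬ G.Adj a d) (nbd : ¬ G.Adj b d) : False := by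
  obtain ⟨x, hx, axa⟩ := hNX ha
  have dax : a ≠ x := by rintro rfl; exact hSX ha hx
  have dxc : x ≠ c := by rintro rfl; exact hSX hc hx
  have dxd : x ≠ d := by rintro rfl; exact hSX hd hx
  have dxb : x ≠ b := by rintro rfl; exact hSX hb hx
  by_cases hxd : G.Adj x d
  · -- x is a common neighbour of a and d in X
    obtain ⟨y, hy, ady⟩ := hNY hd
    have ddy : d ≠ y := by rintro rfl; exact hSY hd hy
    have day : a ≠ y := by rintro rfl; exact hSY ha hy
    have dby : b ≠ y := by rintro rfl; exact hSY hb hy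
    have dcy : c ≠ y := by rintro rfl; exact hSY hc hy
    by_cases hay : G.Adj a y
    · exact NB hc4 hXY had nad hx axa hxd.symm hy hay ady
    · have hby : G.Adj b y := by
        by_contra hby
        exact k2_contra h2k2 hab had day hbd dby ddy eab ady nad hay nbd hby
      have hcy : G.Adj c y := by
        by_contra hcy
        exact c4_contra hc4 hbd.symm dcy ecd.symm ebc.symm hby ady.symm
          (fun h => nbd h.symm) hcy
      have hxc : G.Adj x c := by
        by_contra hxc
        exact k2_contra h2k2 dax day hac (hXY hx hy).2 dxc dcy.symm
          axa hcy.symm hay nac (hXY hx hy).1 hxc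
      have hxb : G.Adj x b := by
        by_contra hxb
        exact c4_contra hc4 dxb hac axa.symm eab ebc hxc.symm hxb nac
      exact c4_contra hc4 hbd (hXY hx hy).2 hxb.symm hxd ady hby.symm
        nbd (hXY hx hy).1
  · -- x is not adjacent to d; then x must be adjacent to c
    have hxc : G.Adj x c := by
      by_contra hxc
      exact k2_contra h2k2 dax hac had dxc dxd hcd axa ecd nac nad hxc hxd
    have hxb : G.Adj x b := by
      by_contra hxb
      exact c4_contra hc4 dxb hac axa.symm eab ebc hxc.symm hxb nac
    obtain ⟨y, hy, ady⟩ := hNY hd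
    have ddy : d ≠ y := by rintro rfl; exact hSY hd hy
    have day : a ≠ y := by rintro rfl; exact hSY ha hy
    have dby : b ≠ y := by rintro rfl; exact hSY hb hy
    have dcy : c ≠ y := by rintro rfl; exact hSY hc hy
    have hya : G.Adj y a := by
      by_contra hya
      exact k2_contra h2k2 ddy had.symm dxd.symm day.symm (hXY hx hy).2.symm dax
        ady axa (fun h => nad h.symm) (fun h => hxd h.symm) hya
        (fun h => (hXY hx hy).1 h.symm)
    have hyb : G.Adj y b := by
      by_contra hyb
      exact k2_contra h2k2 ddy hbd.symm dxd.symm dby.symm (hXY hx hy).2.symm dxb.symm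
        ady hxb.symm (fun h => nbd h.symm) (fun h => hxd h.symm) hyb
        (fun h => (hXY hx hy).1 h.symm)
    by_cases hyc : G.Adj y c
    · exact NB hc4 hXY hac nac hx axa hxc.symm hy hya.symm hyc.symm
    · exact c4_contra hc4 hbd dcy.symm hyb.symm ady.symm ecd.symm ebc.symm nbd hyc

/-- Along a walk from `a` to `b` in `G − (S \ {s})`, if `b` is not reachable from `a`
in `G − S`, we find a neighbour of `s` in the component of `a`. -/
private lemma walk_aux (G : SimpleGraph V) (S : Set V) (s b : V) :
    ∀ {u : V}, (G.removeVerts (S \ {s})).Walk u b → u ∉ S →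
      ¬ (G.removeVerts S).Reachable u b →
      ∃ c, (G.removeVerts S).Reachable u c ∧ c ∉ S ∧ G.Adj s c := by
  intro u W
  induction W with
  | nil => exact fun hu hnr => absurd (SimpleGraph.Reachable.refl _) hnr
  | @cons u x b h W ih =>
    intro hu hnr
    obtain ⟨hadj, hu', hx'⟩ := h
    by_cases hxs : x = s
    · subst hxs
      exact ⟨u, SimpleGraph.Reachable.refl u, hu, hadj.symm⟩
    · have hxS : x ∉ S := fun hx => hx' ⟨hx, hxs⟩
      have hedge : (G.removeVerts S).Adj u x := ⟨hadj, hu, hxS⟩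
      have hnr' : ¬ (G.removeVerts S).Reachable x b := fun hr =>
        hnr (hedge.reachable.trans hr)
      obtain ⟨c, hrc, hcS, hsc⟩ := ih hxS hnr'
      exact ⟨c, hedge.reachable.trans hrc, hcS, hsc⟩

end Helpers

theorem stmt19 [Fintype V] (G : SimpleGraph V) (S : Set V)
    (hconn : G.Connected) (h2k2 : G.TwoK2Free) (hc4 : G.CkFree 4)
    (hS : G.IsMinSep S) :
    (∀ A : Set V, A ⊆ S → (∀ u ∈ A, ∀ v ∈ A, ¬ G.Adj u v) → A.ncard ≤ 2) ∧
    (¬ ∃ a b c d : V, a ∈ S ∧ b ∈ S ∧ c ∈ S ∧ d ∈ S ∧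
      a ≠ b ∧ a ≠ c ∧ a ≠ d ∧ b ≠ c ∧ b ≠ d ∧ c ≠ d ∧
      G.Adj a b ∧ G.Adj b c ∧ G.Adj c d ∧ ¬ G.Adj a c ∧ ¬ G.Adj a d ∧ ¬ G.Adj b d) ∧
    (¬ ∃ x a b c : V, x ∈ S ∧ a ∈ S ∧ b ∈ S ∧ c ∈ S ∧
      x ≠ a ∧ x ≠ b ∧ x ≠ c ∧ a ≠ b ∧ a ≠ c ∧ b ≠ c ∧
      G.Adj x a ∧ G.Adj x b ∧ G.Adj x c ∧ ¬ G.Adj a b ∧ ¬ G.Adj a c ∧ ¬ G.Adj b c) := by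
  obtain ⟨a, b, haS, hbS, hnr, hmin⟩ := hS
  set X : Set V := {v : V | (G.removeVerts S).Reachable a v ∧ v ∉ S} with hXdef
  set Y : Set V := {v : V | (G.removeVerts S).Reachable b v ∧ v ∉ S} with hYdef
  have memX : ∀ {v}, v ∈ X ↔ (G.removeVerts S).Reachable a v ∧ v ∉ S := by
    intro v; rw [hXdef]; exact Iff.rfl
  have memY : ∀ {v}, v ∈ Y ↔ (G.removeVerts S).Reachable b v ∧ v ∉ S := by
    intro v; rw [hYdef]; exact Iff.rfl
  have hXY : ∀ ⦃x⦄, x ∈ X → ∀ ⦃y⦄, y ∈ Y → ¬ G.Adj x y ∧ x ≠ y := by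
    intro x hx y hy
    obtain ⟨hrx, hxS⟩ := memX.mp hx
    obtain ⟨hry, hyS⟩ := memY.mp hy
    constructor
    · intro hadj
      have hedge : (G.removeVerts S).Adj x y := ⟨hadj, hxS, hyS⟩
      exact hnr (hrx.trans (hedge.reachable.trans hry.symm))
    · rintro rfl
      exact hnr (hrx.trans hry.symm)
  have hSX : ∀ ⦃s⦄, s ∈ S → s ∉ X := fun s hs hsX => (memX.mp hsX).2 hs
  have hSY : ∀ ⦃s⦄, s ∈ S → s ∉ Y := fun s hs hsY => (memY.mp hsY).2 hs
  have hNX : ∀ ⦃s⦄, s ∈ S → ∃ x ∈ X, G.Adj s x := by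
    intro s hs
    have hsub : S \ {s} ⊂ S := Set.sdiff_singleton_ssubset.mpr hs
    obtain ⟨c, hrc, hcS, hsc⟩ :=
      walk_aux G S s b (hmin _ hsub).some haS hnr
    exact ⟨c, memX.mpr ⟨hrc, hcS⟩, hsc⟩
  have hNY : ∀ ⦃s⦄, s ∈ S → ∃ y ∈ Y, G.Adj s y := by
    intro s hs
    have hsub : S \ {s} ⊂ S := Set.sdiff_singleton_ssubset.mpr hs
    obtain ⟨c, hrc, hcS, hsc⟩ :=
      walk_aux G S s a ((hmin _ hsub).symm).some hbS (fun hr => hnr hr.symm)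
    exact ⟨c, memY.mpr ⟨hrc, hcS⟩, hsc⟩
  have hTriple : ∀ u ∈ S, ∀ v ∈ S, ∀ w ∈ S, u ≠ v → u ≠ w → v ≠ w →
      ¬ G.Adj u v → ¬ G.Adj u w → ¬ G.Adj v w → False := fun u hu v hv w hw h1 h2 h3 n1 n2 n3 =>
    noTriple h2k2 hc4 hXY hSX hSY hNX hNY hu hv hw h1 h2 h3 n1 n2 n3
  refine ⟨?_, ?_, ?_⟩
  · intro A hA hind
    by_contra hcard
    push_neg at hcard
    obtain ⟨u, hu, v, hv, w, hw, huv, huw, hvw⟩ :=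
      (Set.two_lt_ncard (A.toFinite)).mp hcard
    exact hTriple u (hA hu) v (hA hv) w (hA hw) huv huw hvw
      (hind u hu v hv) (hind u hu w hw) (hind v hv w hw)
  · rintro ⟨p, q, r, t, hp, hq, hr, ht, h1, h2, h3, h4, h5, h6, e1, e2, e3, n1, n2, n3⟩
    exact noP4 h2k2 hc4 hXY hSX hSY hNX hNY hp hq hr ht h1 h2 h3 h4 h5 h6 e1 e2 e3 n1 n2 n3
  · rintro ⟨x, p, q, r, hx, hp, hq, hr, h1, h2, h3, h4, h5, h6, e1, e2, e3, n1, n2, n3⟩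
    exact hTriple p hp q hq r hr h4 h5 h6 n1 n2 n3
end
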